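/- arXiv:0908.1858 — 4 statements merged into one kernel-verified Lean document; each statement's English description precedes it below -/
import Mathlib

section
/- Let H be a self-adjoint operator on a Hilbert space with simple isolated lowest eigenvalue E, spectral gap g > 0 (i.e., spec(H) ∩ (E, E+g) = ∅), and normalized ground state Φ. Let ψ be orthogonal to Φ. Then for any z with |z - E| = μ where 0 < μ < g/3, one has ⟨ψ, |H - z|⁻¹ ψ⟩ ≤ C |⟨ψ, (H - z)⁻¹ ψ⟩| for a constant C depending only on μ/g (e.g., C = (g + μ)/(g - μ) works). -/
open scoped InnerProductSpace

set_option maxHeartbeats 2000000 in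
set_option synthInstance.maxHeartbeats 400000 in
/-- property (B3). For `ψ` orthogonal to the ground state `Φ` and `z` on the
circle `|z - E| = μ` with `0 < μ < g/3`, the expectation of `|H - z|⁻¹` in `ψ` is bounded
by `C = (g+μ)/(g-μ)` times the absolute value of the expectation of `(H - z)⁻¹`.
Here `R = (H - z)⁻¹` and `B = |H - z|⁻¹` is characterized as the positive operator with
`B² = ((H - z̄)(H - z))⁻¹`. -/
theorem stmt2 {F : Type*} [NormedAddCommGroup F] [InnerProductSpace ℂ F] [CompleteSpace F]
    (H : F →L[ℂ] F) (E g μ : ℝ) (Φ ψ : F) (z : ℂ)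
    (hH : IsSelfAdjoint H) (hg : 0 < g)
    (hΦ : ‖Φ‖ = 1) (heig : H Φ = (E : ℂ) • Φ)
    (hsimple : ∀ v : F, H v = (E : ℂ) • v → ∃ c : ℂ, v = c • Φ)
    (hspec : ∀ w ∈ spectrum ℂ H, w = (E : ℂ) ∨ ∃ x : ℝ, w = (x : ℂ) ∧ E + g ≤ x)
    (hbot : ∀ w ∈ spectrum ℂ H, E ≤ w.re)
    (hψ : ⟪Φ, ψ⟫_ℂ = 0)
    (hμ : 0 < μ) (hμg : μ < g / 3) (hz : ‖z - (E : ℂ)‖ = μ)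
    (R : F →L[ℂ] F) (hR1 : R * (H - z • 1) = 1) (hR2 : (H - z • 1) * R = 1)
    (B : F →L[ℂ] F) (hB : B.IsPositive)
    (hBB : B * B * ((H - (starRingEnd ℂ z) • 1) * (H - z • 1)) = 1)
    (hBB' : ((H - (starRingEnd ℂ z) • 1) * (H - z • 1)) * (B * B) = 1) :
    (⟪ψ, B ψ⟫_ℂ).re ≤ (g + μ) / (g - μ) * ‖⟪ψ, R ψ⟫_ℂ‖ := by
  have hgμ : 0 < g - μ := by linarith
  set Cst : ℝ := (g + μ) / (g - μ) with hCst
  have hCpos : 0 < Cst := div_pos (by linarith) hgμ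
  -- real spectrum description
  have hspecR : ∀ x ∈ spectrum ℝ H, x = E ∨ E + g ≤ x := by
    intro x hx
    have hx' : (x : ℂ) ∈ spectrum ℂ H := spectrum.algebraMap_mem ℂ hx
    rcases hspec _ hx' with h | ⟨y, hy, hy2⟩
    · left; exact_mod_cast h
    · right; have hxy : x = y := by exact_mod_cast hy
      linarith [hxy ▸ hy2]
  -- bounds on z
  have hzre : |z.re - E| ≤ μ := by
    have h1 : |(z - (E:ℂ)).re| ≤ ‖z - (E:ℂ)‖ := Complex.abs_re_le_norm _
    simpa [hz, Complex.sub_re] using h1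
  have hnorm_ge : ∀ x : ℝ, E + g ≤ x → g - μ ≤ ‖(x:ℂ) - z‖ := by
    intro x hx
    have h1 : ‖(x:ℂ) - (E:ℂ)‖ - ‖z - (E:ℂ)‖ ≤ ‖(x:ℂ) - z‖ := by
      have h0 := norm_sub_norm_le ((x:ℂ) - (E:ℂ)) (z - (E:ℂ))
      simpa [sub_sub_sub_cancel_right] using h0
    have h2 : ‖(x:ℂ) - (E:ℂ)‖ = x - E := by
      rw [← Complex.ofReal_sub, Complex.norm_real, Real.norm_eq_abs,
        abs_of_nonneg (by linarith)]
    rw [h2, hz] at h1; linarith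
  have hEz : ‖(E:ℂ) - z‖ = μ := by rw [norm_sub_rev]; exact hz
  have hne : ∀ x ∈ spectrum ℝ H, ‖(x:ℂ) - z‖ ≠ 0 := by
    intro x hx
    rcases hspecR x hx with h | h
    · subst h; rw [hEz]; exact ne_of_gt hμ
    · have := hnorm_ge x h; linarith
  -- the functions
  set b : ℝ → ℝ := fun x => ‖(x:ℂ) - z‖⁻¹ with hbdef
  have hbcont : ContinuousOn b (spectrum ℝ H) := by
    exact ContinuousOn.inv₀
      ((Complex.continuous_ofReal.sub continuous_const).norm).continuousOn hne
  have hbnonneg : ∀ x, 0 ≤ b x := fun x => by positivity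
  set q : ℝ → ℝ := fun x => x^2 - 2*z.re*x + ‖z‖^2 with hqdef
  have normsq : ∀ w : ℂ, ‖w‖^2 = w.re^2 + w.im^2 := fun w => by
    rw [Complex.sq_norm, Complex.normSq_apply]; ring
  have hqval : ∀ x : ℝ, q x = ‖(x:ℂ) - z‖^2 := by
    intro x
    rw [normsq, hqdef]
    simp only [Complex.sub_re, Complex.sub_im, Complex.ofReal_re, Complex.ofReal_im]
    rw [normsq z]; ring
  -- the operator Q = (H - z̄)(H - z) and its cfc realization
  set Q : F →L[ℂ] F := (H - (starRingEnd ℂ z) • 1) * (H - z • 1) with hQdef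
  have hnormSq : Complex.normSq z = ‖z‖^2 := by rw [normsq z, Complex.normSq_apply]; ring
  have hconj : (starRingEnd ℂ z) * z = ((‖z‖^2 : ℝ) : ℂ) := by
    rw [mul_comm, Complex.mul_conj, hnormSq]
  have hconj2 : z * starRingEnd ℂ z = ((‖z‖^2 : ℝ) : ℂ) := by
    rw [Complex.mul_conj, hnormSq]
  have hzsum : z + starRingEnd ℂ z = ((2*z.re : ℝ) : ℂ) := Complex.add_conj z
  have hQ' : Q = H*H - (2*z.re) • H + (‖z‖^2 : ℝ) • (1 : F →L[ℂ] F) := by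
    rw [hQdef]
    simp only [mul_sub, sub_mul, smul_sub, smul_mul_assoc, mul_smul_comm, smul_smul,
      one_mul, mul_one, hconj, hconj2]
    rw [Complex.coe_smul, ← Complex.coe_smul (2*z.re) H, ← hzsum, add_smul]
    abel
  have hQ : cfc q H = Q := by
    rw [hqdef]
    rw [cfc_add (a := H) (fun x : ℝ => x^2 - 2*z.re*x) (fun _ : ℝ => ‖z‖^2),
      cfc_sub (fun x : ℝ => x^2) (fun x : ℝ => 2*z.re*x) H,
      cfc_pow_id H 2, cfc_const_mul_id (2*z.re) H, cfc_const (‖z‖^2) H,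
      Algebra.algebraMap_eq_smul_one, hQ', sq]
  -- cfc (b*b) H = B*B
  have hqcont : ContinuousOn q (spectrum ℝ H) := by rw [hqdef]; fun_prop
  have hbbq : cfc (fun x => b x * b x) H * cfc q H = 1 := by
    rw [← cfc_mul (fun x => b x * b x) q H (hbcont.mul hbcont) hqcont]
    have hEq : (spectrum ℝ H).EqOn (fun x => (b x * b x) * q x) (fun _ => 1) := by
      intro x hx
      have hq := hqval x
      have hnz := hne x hx
      simp only [hbdef]
      rw [hq]
      field_simp [sq]
    rw [cfc_congr hEq, cfc_const 1 H, map_one]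
  have hcfcbb : cfc (fun x => b x * b x) H = B * B := by
    calc cfc (fun x => b x * b x) H
        = cfc (fun x => b x * b x) H * (Q * (B*B)) := by rw [hBB', mul_one]
      _ = (cfc (fun x => b x * b x) H * cfc q H) * (B*B) := by
            rw [hQ]; simp only [hQdef, mul_assoc]
      _ = B*B := by rw [hbbq, one_mul]
  -- B = cfc b H
  have hBcfc : B = cfc b H := by
    have h0 : (0 : F →L[ℂ] F) ≤ B := (ContinuousLinearMap.nonneg_iff_isPositive B).mpr hB
    have h1 : (0 : F →L[ℂ] F) ≤ cfc b H := cfc_nonneg (fun x _ => hbnonneg x)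
    have h2 : cfc b H * cfc b H = B * B := by
      rw [← cfc_mul b b H hbcont hbcont, hcfcbb]
    calc B = CFC.sqrt (B*B) := (CFC.sqrt_mul_self B h0).symm
      _ = cfc b H := CFC.sqrt_unique h2 h1
  -- commutation and adjoint facts for R
  have hRcomm : R * H = H * R := by
    have h : R * (H - z • 1) = (H - z • 1) * R := by rw [hR1, hR2]
    simpa [mul_sub, sub_mul, mul_smul_comm, smul_mul_assoc, mul_one, one_mul,
      sub_left_inj] using h
  have hstar_sub : star (H - z • (1 : F →L[ℂ] F)) = H - (starRingEnd ℂ z) • 1 := by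
    simp [star_sub, star_smul, hH.star_eq, Complex.star_def]
  have hRs1 : (H - (starRingEnd ℂ z) • 1) * star R = 1 := by
    calc (H - (starRingEnd ℂ z) • 1) * star R = star (R * (H - z • 1)) := by
          rw [star_mul, hstar_sub]
      _ = 1 := by rw [hR1, star_one]
  have hRRstar : R * star R = B * B := by
    have h1 : Q * (R * star R) = 1 := by
      rw [hQdef, mul_assoc, ← mul_assoc (H - z • 1) R (star R), hR2, one_mul, hRs1]
    calc R * star R = ((B*B) * Q) * (R * star R) := by rw [hBB, one_mul]
      _ = (B*B) * (Q * (R * star R)) := by rw [mul_assoc]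
      _ = B*B := by rw [h1, mul_one]
  -- the symmetrized resolvent
  set Sop : F →L[ℂ] F := (H - (z.re : ℂ) • 1) * (B * B) with hSdef
  have hsum : R + star R = (2:ℂ) • Sop := by
    have e1 : R * ((H - (starRingEnd ℂ z) • 1) * star R) = R := by rw [hRs1, mul_one]
    have e2 : (R * (H - z • 1)) * star R = star R := by rw [hR1, one_mul]
    have e3 : R * (((H - (starRingEnd ℂ z) • 1) + (H - z • 1)) * star R) = R + star R := by
      rw [add_mul, mul_add, e1, ← mul_assoc, e2]
    have e4 : (H - (starRingEnd ℂ z) • 1) + (H - z • 1)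
        = (2:ℂ) • (H - (z.re : ℂ) • 1) := by
      have h24 : (2:ℂ) * (z.re:ℂ) = z + starRingEnd ℂ z := by rw [hzsum]; push_cast; ring
      rw [smul_sub, smul_smul, h24, two_smul, add_smul]
      abel
    rw [← e3, e4, smul_mul_assoc, mul_smul_comm, hSdef]
    congr 1
    have hcomm : R * (H - (z.re:ℂ) • 1) = (H - (z.re:ℂ) • 1) * R := by
      simp [mul_sub, sub_mul, mul_smul_comm, smul_mul_assoc, hRcomm]
    rw [← mul_assoc, hcomm, mul_assoc, hRRstar]
  -- real parts
  have hstar_inner : ⟪ψ, (star R) ψ⟫_ℂ = starRingEnd ℂ ⟪ψ, R ψ⟫_ℂ := by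
    rw [ContinuousLinearMap.star_eq_adjoint, ContinuousLinearMap.adjoint_inner_right,
      ← inner_conj_symm]
  have hRe : (⟪ψ, R ψ⟫_ℂ).re = (⟪ψ, Sop ψ⟫_ℂ).re := by
    have h2 : ⟪ψ, (R + star R) ψ⟫_ℂ = (2:ℂ) * ⟪ψ, Sop ψ⟫_ℂ := by
      rw [hsum]; simp [inner_smul_right]
    rw [ContinuousLinearMap.add_apply, inner_add_right, hstar_inner] at h2
    have h3 := congrArg Complex.re h2
    simp only [Complex.add_re, Complex.conj_re, Complex.mul_re, Complex.re_ofNat,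
      Complex.im_ofNat, Complex.ofReal_re, zero_mul, sub_zero] at h3
    linarith
  -- cfc of s is Sop
  set s : ℝ → ℝ := fun x => (x - z.re) * (b x * b x) with hsdef
  have hscont : ContinuousOn s (spectrum ℝ H) := by
    apply ContinuousOn.mul
    · fun_prop
    · exact hbcont.mul hbcont
  have hS : cfc s H = Sop := by
    rw [hsdef, cfc_mul (fun x => x - z.re) (fun x => b x * b x) H (by fun_prop)
        (hbcont.mul hbcont),
      hcfcbb, cfc_sub (fun x : ℝ => x) (fun _ => z.re) H, cfc_id' ℝ H, cfc_const z.re H,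
      Algebra.algebraMap_eq_smul_one, hSdef, Complex.coe_smul]
  -- the function f and the bump function σ
  set f : ℝ → ℝ := fun x => Cst * s x - b x with hfdef
  have hfcont : ContinuousOn f (spectrum ℝ H) :=
    (continuousOn_const.mul hscont).sub hbcont
  set σ : ℝ → ℝ := fun x => max 0 (1 - (x - E)/g) with hσdef
  have hσcont : Continuous σ := by
    rw [hσdef]; fun_prop
  have hσE : σ E = 1 := by simp [hσdef]
  have hσ0 : ∀ x : ℝ, E + g ≤ x → σ x = 0 := by
    intro x hx
    have h1 : 1 ≤ (x - E)/g := (le_div_iff₀ hg).mpr (by linarith)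
    simp only [hσdef]
    exact max_eq_left (by linarith)
  -- positivity of f on the high part of the spectrum
  have hfpos : ∀ x ∈ spectrum ℝ H, E + g ≤ x → 0 ≤ f x := by
    intro x hx hge
    have hn := hnorm_ge x hge
    have hnpos : 0 < ‖(x:ℂ) - z‖ := lt_of_lt_of_le hgμ hn
    have hkey : ‖(x:ℂ) - z‖ ≤ Cst * (x - z.re) := by
      have h1 : ‖(x:ℂ) - z‖ ≤ (x - E) + μ := by
        have hsplit : (x:ℂ) - z = ((x:ℂ) - (E:ℂ)) + ((E:ℂ) - z) := by ring
        calc ‖(x:ℂ) - z‖ ≤ ‖(x:ℂ) - (E:ℂ)‖ + ‖(E:ℂ) - z‖ := by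
              rw [hsplit]; exact norm_add_le _ _
          _ = (x - E) + μ := by
              rw [hEz, ← Complex.ofReal_sub, Complex.norm_real, Real.norm_eq_abs,
                abs_of_nonneg (by linarith)]
      have h2 : x - E - μ ≤ x - z.re := by
        have := (abs_le.mp hzre).2; linarith
      have h3 : (x - E) + μ ≤ Cst * (x - E - μ) := by
        rw [hCst, div_mul_eq_mul_div, le_div_iff₀ hgμ]
        nlinarith
      calc ‖(x:ℂ) - z‖ ≤ (x - E) + μ := h1
        _ ≤ Cst * (x - E - μ) := h3
        _ ≤ Cst * (x - z.re) := mul_le_mul_of_nonneg_left h2 hCpos.le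
    have hfx : f x = (Cst * (x - z.re) - ‖(x:ℂ) - z‖) * (b x * b x) := by
      have hnz' : ‖(x:ℂ) - z‖ ≠ 0 := by
        exact hnpos.ne'
      simp only [hfdef, hsdef, hbdef]
      field_simp
    rw [hfx]
    exact mul_nonneg (by linarith) (mul_nonneg (hbnonneg x) (hbnonneg x))
  -- decomposition of cfc f H
  have hcfcf : cfc f H = cfc (fun x => f x * (1 - σ x)) H + (f E) • cfc σ H := by
    have hEq : (spectrum ℝ H).EqOn f (fun x => f x * (1 - σ x) + f E * σ x) := by
      intro x hx
      rcases hspecR x hx with rfl | hge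
      · simp [hσE]
      · simp [hσ0 x hge]
    rw [cfc_congr hEq,
      cfc_add (a := H) (fun x => f x * (1 - σ x)) (fun x => f E * σ x)
        (hfcont.mul (by fun_prop)) (by fun_prop),
      cfc_const_mul (f E) σ H hσcont.continuousOn]
  have hpos1 : (0 : F →L[ℂ] F) ≤ cfc (fun x => f x * (1 - σ x)) H := by
    apply cfc_nonneg
    intro x hx
    rcases hspecR x hx with rfl | hge
    · simp [hσE]
    · rw [hσ0 x hge]
      have h7 := mul_nonneg (hfpos x hx hge) (by norm_num : (0:ℝ) ≤ 1 - 0)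
      simpa using h7
  -- the bump part kills ψ
  have hD : (H - algebraMap ℝ (F →L[ℂ] F) E) * cfc σ H = 0 := by
    have h1 : cfc (fun x => (x - E) * σ x) H
        = (cfc (fun x : ℝ => x - E) H) * cfc σ H :=
      cfc_mul _ _ H (by fun_prop) hσcont.continuousOn
    have h2 : cfc (fun x : ℝ => x - E) H = H - algebraMap ℝ (F →L[ℂ] F) E := by
      rw [cfc_sub (fun x : ℝ => x) (fun _ => E) H, cfc_id' ℝ H, cfc_const E H]
    have h3 : (spectrum ℝ H).EqOn (fun x => (x - E) * σ x) (fun _ => 0) := by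
      intro x hx; rcases hspecR x hx with rfl | hge
      · simp
      · simp [hσ0 x hge]
    rw [← h2, ← h1, cfc_congr h3, cfc_const 0 H, map_zero]
  have hDψ : ⟪ψ, (cfc σ H) ψ⟫_ℂ = 0 := by
    have h5 : H ((cfc σ H) ψ) = (E:ℂ) • ((cfc σ H) ψ) := by
      rw [sub_mul, sub_eq_zero] at hD
      have h6 := congrArg (fun T : F →L[ℂ] F => T ψ) hD
      simp only [ContinuousLinearMap.mul_apply] at h6
      rw [h6, Algebra.algebraMap_eq_smul_one]
      rw [ContinuousLinearMap.smul_apply, ContinuousLinearMap.one_apply,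
        ← Complex.coe_smul]
    obtain ⟨c, hc⟩ := hsimple _ h5
    rw [hc, inner_smul_right, ← inner_conj_symm, hψ, map_zero, mul_zero]
  have hψΦ : ⟪ψ, Φ⟫_ℂ = 0 := by rw [← inner_conj_symm, hψ, map_zero]
  -- nonnegativity of the full quadratic form
  have hTotal : 0 ≤ (⟪ψ, (cfc f H) ψ⟫_ℂ).re := by
    rw [hcfcf]
    rw [ContinuousLinearMap.add_apply, inner_add_right,
      ContinuousLinearMap.smul_apply, ← Complex.coe_smul, inner_smul_right, hDψ,
      mul_zero, add_zero]
    have hpos1' := (ContinuousLinearMap.nonneg_iff_isPositive _).mp hpos1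
    exact (Complex.nonneg_iff.mp (hpos1'.inner_nonneg_right ψ)).1
  -- identify cfc f H
  have hcfcF : cfc f H = Cst • Sop - B := by
    rw [hfdef,
      cfc_sub (fun x => Cst * s x) b H (continuousOn_const.mul hscont) hbcont,
      cfc_const_mul Cst s H hscont, hS, ← hBcfc]
  have hfinal : (⟪ψ, B ψ⟫_ℂ).re ≤ Cst * (⟪ψ, Sop ψ⟫_ℂ).re := by
    rw [hcfcF] at hTotal
    rw [ContinuousLinearMap.sub_apply, inner_sub_right,
      ContinuousLinearMap.smul_apply, ← Complex.coe_smul, inner_smul_right] at hTotal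
    simp only [Complex.sub_re, Complex.mul_re, Complex.ofReal_re, Complex.ofReal_im,
      zero_mul, sub_zero] at hTotal
    linarith
  have hre_norm : (⟪ψ, R ψ⟫_ℂ).re ≤ ‖⟪ψ, R ψ⟫_ℂ‖ := by
    exact Complex.re_le_norm _
  calc (⟪ψ, B ψ⟫_ℂ).re ≤ Cst * (⟪ψ, Sop ψ⟫_ℂ).re := hfinal
    _ = Cst * (⟪ψ, R ψ⟫_ℂ).re := by rw [← hRe]
    _ ≤ Cst * ‖⟪ψ, R ψ⟫_ℂ‖ := mul_le_mul_of_nonneg_left hre_norm hCpos.le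
end

section
/- Let H be a self-adjoint operator with simple isolated lowest eigenvalue E, spectral gap g > 0, and normalized ground state Φ. Let ψ ⊥ Φ. Then for z with |z - E| = μ, 0 < μ < g/3, one has ⟨ψ, |H - z|⁻² ψ⟩ ≤ C |⟨ψ, (H - z)⁻² ψ⟩| for a constant C depending only on μ/g. -/
open scoped InnerProductSpace


lemma gap_bound {F : Type} [NormedAddCommGroup F] [InnerProductSpace ℂ F] [CompleteSpace F]
    (H : F →L[ℂ] F) (E g : ℝ) (Φ : F) (hH : IsSelfAdjoint H) (hg : 0 < g)
    (hΦ : ‖Φ‖ = 1) (hEΦ : H Φ = (E:ℂ) • Φ)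
    (hsimp : ∀ v : F, H v = (E:ℂ) • v → ∃ c : ℂ, v = c • Φ)
    (hspec : ∀ x ∈ spectrum ℝ H, x = E ∨ E + g ≤ x) :
    ∀ v : F, ⟪Φ, v⟫_ℂ = 0 → (E + g) * ‖v‖^2 ≤ (⟪v, H v⟫_ℂ).re := by
  intro v hv
  set f : ℝ → ℝ := fun t => max (1 - (2/g)*|t - E|) 0 with hfdef
  have hfc : Continuous f := by
    apply Continuous.max _ continuous_const
    fun_prop
  have hfE : f E = 1 := by simp [hfdef]
  have hf0 : ∀ t, E + g ≤ t → f t = 0 := by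
    intro t ht
    have h1 : g ≤ t - E := by linarith
    have h2 : (2:ℝ) ≤ (2/g) * |t - E| := by
      rw [abs_of_nonneg (by linarith), div_mul_eq_mul_div, le_div_iff₀ hg]
      nlinarith
    simp only [hfdef, max_eq_right_iff]
    linarith
  set P := cfc f H with hPdef
  have hPsa : IsSelfAdjoint P := cfc_predicate f H
  have hHP : H * P = (E : ℝ) • P := by
    have h1 : cfc (fun t : ℝ => t * f t) H = H * P := by
      rw [cfc_mul (fun t : ℝ => t) f H (by fun_prop) (hfc.continuousOn), cfc_id' ℝ H]
    have h2 : cfc (fun t : ℝ => t * f t) H = cfc (fun t : ℝ => E * f t) H := by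
      apply cfc_congr
      intro t ht
      rcases hspec t ht with h | h
      · rw [h]
      · simp [hf0 t h]
    rw [← h1, h2, cfc_const_mul E f H (hfc.continuousOn)]
  have hPeig : ∀ x : F, H (P x) = (E:ℂ) • P x := by
    intro x
    have := congrFun (congrArg DFunLike.coe hHP) x
    simp only [ContinuousLinearMap.mul_apply, ContinuousLinearMap.smul_apply] at this
    rw [this, Complex.coe_smul]
  have hPv : P v = 0 := by
    obtain ⟨c, hc⟩ := hsimp (P v) (hPeig v)
    obtain ⟨d, hd⟩ := hsimp (P Φ) (hPeig Φ)
    have h1 : ⟪Φ, P v⟫_ℂ = c := by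
      rw [hc, inner_smul_right, inner_self_eq_norm_sq_to_K, hΦ]
      norm_num
    have h2 : ⟪Φ, P v⟫_ℂ = 0 := by
      have h5 : ⟪P Φ, v⟫_ℂ = ⟪Φ, P v⟫_ℂ := by
        rw [← ContinuousLinearMap.adjoint_inner_left]
        congr 1
        rw [← ContinuousLinearMap.star_eq_adjoint, hPsa.star_eq]
      rw [← h5, hd, inner_smul_left, hv, mul_zero]
    have hc0 : c = 0 := by rw [← h1, h2]
    rw [hc, hc0, zero_smul]
  -- now the positivity part
  set h : ℝ → ℝ := fun t => max ((t - (E+g)) * (1 - f t)) 0 with hhdef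
  have hhc : Continuous h := by
    apply Continuous.max _ continuous_const
    exact ((continuous_id.sub continuous_const).mul (continuous_const.sub hfc))
  set Q := cfc (fun t => Real.sqrt (h t)) H with hQdef
  have hQsa : IsSelfAdjoint Q := cfc_predicate _ H
  have hQQ : Q * Q = cfc h H := by
    rw [hQdef, ← cfc_mul _ _ H (by fun_prop) (by fun_prop)]
    apply cfc_congr
    intro t _
    exact Real.mul_self_sqrt (le_max_right _ _)
  have hch : cfc h H = (H - algebraMap ℝ (F →L[ℂ] F) (E+g)) * (1 - P) := by
    have h1 : cfc h H = cfc (fun t : ℝ => (t - (E+g)) * (1 - f t)) H := by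
      apply cfc_congr
      intro t ht
      rcases hspec t ht with h | h
      · simp [hhdef, h, hfE]
      · rw [hhdef]
        simp only [hf0 t h]
        rw [max_eq_left (by nlinarith)]
    rw [h1, cfc_mul _ _ H (by fun_prop) (by fun_prop),
      cfc_sub _ _ H (by fun_prop) (by fun_prop),
      cfc_sub _ _ H (by fun_prop) (by fun_prop), cfc_id' ℝ H, cfc_const _ H,
      cfc_const (1:ℝ) H, map_one]
  have hQv : Q (Q v) = H v - ((E+g:ℝ):ℂ) • v := by
    have h6 := congrFun (congrArg DFunLike.coe (hQQ.trans hch)) v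
    simp only [ContinuousLinearMap.mul_apply, ContinuousLinearMap.sub_apply,
      ContinuousLinearMap.one_apply, hPv, sub_zero, Algebra.algebraMap_eq_smul_one,
      ContinuousLinearMap.smul_apply] at h6
    rw [h6, Complex.coe_smul]
  have h2 : ⟪v, Q (Q v)⟫_ℂ = ⟪Q v, Q v⟫_ℂ := by
    rw [← ContinuousLinearMap.adjoint_inner_left]
    congr 1
    rw [← ContinuousLinearMap.star_eq_adjoint, hQsa.star_eq]
  have h3 : (0:ℝ) ≤ (⟪v, Q (Q v)⟫_ℂ).re := by
    rw [h2, show (⟪Q v, Q v⟫_ℂ).re = ‖Q v‖^2 from inner_self_eq_norm_sq (𝕜 := ℂ) (Q v)]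
    positivity
  have h4 : (⟪v, Q (Q v)⟫_ℂ).re = (⟪v, H v⟫_ℂ).re - (E+g) * ‖v‖^2 := by
    rw [hQv, inner_sub_right, inner_smul_right]
    have h5 : (⟪v, v⟫_ℂ).re = ‖v‖^2 := inner_self_eq_norm_sq (𝕜 := ℂ) v
    have h5' : (⟪v, v⟫_ℂ).im = 0 := by
      rw [← Complex.conj_eq_iff_im.mp]
      exact inner_self_conj v
    simp only [Complex.sub_re, Complex.mul_re, Complex.ofReal_re, Complex.ofReal_im,
      zero_mul, sub_zero, h5]
  linarith [h4 ▸ h3]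


section Aux

variable {F : Type} [NormedAddCommGroup F] [InnerProductSpace ℂ F]

lemma move_star [CompleteSpace F] (T : F →L[ℂ] F) (x y : F) :
    ⟪(star T) x, y⟫_ℂ = ⟪x, T y⟫_ℂ := by
  rw [ContinuousLinearMap.star_eq_adjoint]
  exact ContinuousLinearMap.adjoint_inner_left T y x

lemma expand_inner (v y : F) (b : ℝ) (hq : (⟪v, y⟫_ℂ).im = 0) :
    (⟪y - ((b:ℂ)*Complex.I) • v, y - ((b:ℂ)*Complex.I) • v⟫_ℂ).re
        = ‖y‖^2 + b^2*‖v‖^2 ∧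
      (⟪y - ((b:ℂ)*Complex.I) • v, y + ((b:ℂ)*Complex.I) • v⟫_ℂ).re
        = ‖y‖^2 - b^2*‖v‖^2 := by
  have hyv : ⟪y, v⟫_ℂ = starRingEnd ℂ ⟪v, y⟫_ℂ := (inner_conj_symm y v).symm
  have hvv : (⟪v, v⟫_ℂ).re = ‖v‖^2 := inner_self_eq_norm_sq (𝕜 := ℂ) v
  have hvvim : (⟪v, v⟫_ℂ).im = 0 := inner_self_im (𝕜 := ℂ) v
  have hyy : (⟪y, y⟫_ℂ).re = ‖y‖^2 := inner_self_eq_norm_sq (𝕜 := ℂ) y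
  have hyyim : (⟪y, y⟫_ℂ).im = 0 := inner_self_im (𝕜 := ℂ) y
  constructor <;>
  · simp only [inner_sub_left, inner_sub_right, inner_add_right, inner_smul_left,
      inner_smul_right, hyv, map_mul, Complex.conj_I, Complex.conj_ofReal,
      Complex.sub_re, Complex.add_re, Complex.mul_re, Complex.mul_im,
      Complex.I_re, Complex.I_im, Complex.ofReal_re, Complex.ofReal_im,
      Complex.conj_re, Complex.conj_im, Complex.neg_re, Complex.neg_im,
      Complex.sub_im, Complex.add_im, hvv, hvvim, hyy, hyyim, hq]
    ring

noncomputable def Cfun (t : ℝ) : ℝ := if 2*t < 1 then ((1-t)^2 + t^2)/(1-2*t) else 1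

lemma Cfun_pos (t : ℝ) : 0 < Cfun t := by
  rw [Cfun]
  split_ifs with h
  · apply div_pos (by nlinarith) (by linarith)
  · norm_num

lemma main_scalar {g μ : ℝ} (hg : 0 < g) (hμ : 0 < μ) (hμg : μ < g/3) :
    ∀ n s bb : ℝ, 0 ≤ n → 0 ≤ s → (g-μ)*n^2 ≤ n*s → bb^2 ≤ μ^2 →
      (s^2 + bb^2*n^2) * (g*(g-2*μ)) ≤ ((g-μ)^2+μ^2) * (s^2 - bb^2*n^2) := by
  intro n s bb hn hs h1 h2
  have hns : (g-μ)*n ≤ s := by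
    rcases hn.eq_or_lt with h | h
    · rw [← h, mul_zero]; exact hs
    · nlinarith
  have hs2 : (g-μ)^2*n^2 ≤ s^2 := by nlinarith
  have hb2n : bb^2 * n^2 ≤ μ^2 * n^2 := mul_le_mul_of_nonneg_right h2 (sq_nonneg n)
  nlinarith [mul_le_mul_of_nonneg_left hs2 (sq_nonneg μ),
    mul_le_mul_of_nonneg_left hb2n (sq_nonneg (g-μ))]

lemma Cfun_eq {g μ : ℝ} (hg : 0 < g) (hμ : 0 < μ) (hμg : μ < g/3) :
    Cfun (μ/g) = ((g-μ)^2+μ^2)/(g*(g-2*μ)) := by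
  have hlt : 2*(μ/g) < 1 := by
    rw [mul_div_assoc', div_lt_one hg]
    linarith
  have hg2 : (0:ℝ) < g * (g - 2*μ) := mul_pos hg (by linarith)
  rw [Cfun, if_pos hlt, div_eq_div_iff (by linarith) (ne_of_gt hg2)]
  field_simp

end Aux

/-- property (B5), squared-resolvent analogue of (B3): for `ψ ⊥ Φ` and
`|z - E| = μ < g/3`, `⟨ψ, |H-z|⁻² ψ⟩ ≤ C |⟨ψ, (H-z)⁻² ψ⟩|` with `C` depending only on
`μ/g`. Here `S = |H - z|⁻² = ((H - z̄)(H - z))⁻¹` and `R = (H - z)⁻¹`. -/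
theorem stmt3 : ∃ C : ℝ → ℝ, (∀ t, 0 < C t) ∧
    ∀ (F : Type) [NormedAddCommGroup F] [InnerProductSpace ℂ F] [CompleteSpace F]
      (H : F →L[ℂ] F) (E g μ : ℝ) (Φ ψ : F) (z : ℂ),
      IsSelfAdjoint H → 0 < g →
      ‖Φ‖ = 1 → H Φ = (E : ℂ) • Φ →
      (∀ v : F, H v = (E : ℂ) • v → ∃ c : ℂ, v = c • Φ) →
      (∀ w ∈ spectrum ℂ H, w = (E : ℂ) ∨ ∃ x : ℝ, w = (x : ℂ) ∧ E + g ≤ x) →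
      ⟪Φ, ψ⟫_ℂ = 0 →
      0 < μ → μ < g / 3 → ‖z - (E : ℂ)‖ = μ →
      ∀ R S : F →L[ℂ] F,
        R * (H - z • 1) = 1 → (H - z • 1) * R = 1 →
        S * ((H - (starRingEnd ℂ z) • 1) * (H - z • 1)) = 1 →
        ((H - (starRingEnd ℂ z) • 1) * (H - z • 1)) * S = 1 →
        (⟪ψ, S ψ⟫_ℂ).re ≤ C (μ / g) * ‖⟪ψ, R (R ψ)⟫_ℂ‖ := by
  classical
  refine ⟨Cfun, Cfun_pos, ?_⟩
  intro F _ _ _ H E g μ Φ ψ z hH hg hΦ hEΦ hsimp hspec hperp hμ hμg hz R S hRA hAR hSD hDS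
  set A := H - z • 1 with hAdef
  set B := H - (starRingEnd ℂ z) • 1 with hBdef
  set D := B * A with hDdef
  have hstarA : star A = B := by
    rw [hAdef, hBdef, star_sub, star_smul, star_one, hH.star_eq]
    rfl
  have hstarB : star B = A := by
    rw [← hstarA, star_star]
  -- commutation
  have hAB : A * B = B * A := by
    rw [hAdef, hBdef]
    simp only [mul_sub, sub_mul, smul_mul_assoc, mul_smul_comm, one_mul, mul_one,
      smul_sub, smul_smul, mul_comm (starRingEnd ℂ z) z]
    abel
  have hRB : R * B = B * R := by
    have h1 : R * (B * A) * R = R * (A * B) * R := by rw [hAB]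
    calc R * B = R * B * (A * R) := by rw [hAR, mul_one]
      _ = R * (B * A) * R := by noncomm_ring
      _ = R * (A * B) * R := h1
      _ = (R * A) * (B * R) := by noncomm_ring
      _ = B * R := by rw [hRA, one_mul]
  -- star facts on R
  have hBstarR : B * star R = 1 := by
    have := congrArg star hRA
    rw [star_mul, star_one, hstarA] at this
    exact this
  have hstarRB : star R * B = 1 := by
    have := congrArg star hAR
    rw [star_mul, star_one, hstarA] at this
    exact this
  -- S = R * star R
  have hSval : S = R * star R := by
    have h1 : D * (R * star R) = 1 := by
      calc D * (R * star R) = B * (A * R) * star R := by rw [hDdef]; noncomm_ring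
        _ = B * star R := by rw [hAR, mul_one]
        _ = 1 := hBstarR
    calc S = S * (D * (R * star R)) := by rw [h1, mul_one]
      _ = (S * D) * (R * star R) := by noncomm_ring
      _ = R * star R := by rw [hSD, one_mul]
  have hstarS : star S = S := by
    rw [hSval, star_mul, star_star]
  set v := S ψ with hvdef
  have hψv : ψ = D v := by
    have := congrFun (congrArg DFunLike.coe hDS) ψ
    simpa [ContinuousLinearMap.mul_apply] using this.symm
  -- inner product identities
  have h2 : ⟪ψ, S ψ⟫_ℂ = ⟪A v, A v⟫_ℂ := by
    calc ⟪ψ, S ψ⟫_ℂ = ⟪D v, v⟫_ℂ := by rw [← hvdef, ← hψv]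
      _ = ⟪(star A) (A v), v⟫_ℂ := by
          rw [hstarA]; simp [hDdef, ContinuousLinearMap.mul_apply]
      _ = ⟪A v, A v⟫_ℂ := move_star A (A v) v
  have h3 : R (R ψ) = B (R v) := by
    have hop : R * R * D = B * R := by
      calc R * R * D = R * (R * B) * A := by rw [hDdef]; noncomm_ring
        _ = R * (B * R) * A := by rw [hRB]
        _ = (R * B) * (R * A) := by noncomm_ring
        _ = B * R := by rw [hRB, hRA, mul_one]
    have := congrFun (congrArg DFunLike.coe hop) v
    simp only [ContinuousLinearMap.mul_apply] at this
    rw [hψv, this]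
  have h4 : ⟪ψ, R (R ψ)⟫_ℂ = ⟪A v, B v⟫_ℂ := by
    have hop : A * (B * R) = B := by
      calc A * (B * R) = B * (A * R) := by rw [← mul_assoc, hAB]; noncomm_ring
        _ = B := by rw [hAR, mul_one]
    calc ⟪ψ, R (R ψ)⟫_ℂ = ⟪(star A) (A v), B (R v)⟫_ℂ := by
          rw [h3, hψv, hstarA]; simp [hDdef, ContinuousLinearMap.mul_apply]
      _ = ⟪A v, A (B (R v))⟫_ℂ := move_star A (A v) (B (R v))
      _ = ⟪A v, B v⟫_ℂ := by
          have := congrFun (congrArg DFunLike.coe hop) v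
          simp only [ContinuousLinearMap.mul_apply] at this
          rw [this]
  -- v ⊥ Φ
  have hzE : (E : ℂ) - z ≠ 0 := by
    intro h
    have : z - (E:ℂ) = 0 := by linear_combination -h
    rw [this] at hz
    simp at hz
    linarith
  have hzE' : (E : ℂ) - starRingEnd ℂ z ≠ 0 := by
    intro h
    apply hzE
    have := congrArg (starRingEnd ℂ) h
    simpa [map_sub, Complex.conj_conj, Complex.conj_ofReal] using this
  have hDΦ : D Φ = (((E:ℂ) - starRingEnd ℂ z) * ((E:ℂ) - z)) • Φ := by
    have hAΦ : A Φ = ((E:ℂ) - z) • Φ := by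
      simp [hAdef, ContinuousLinearMap.sub_apply, hEΦ, sub_smul]
    have hBΦ : B Φ = ((E:ℂ) - starRingEnd ℂ z) • Φ := by
      simp [hBdef, ContinuousLinearMap.sub_apply, hEΦ, sub_smul]
    simp [hDdef, ContinuousLinearMap.mul_apply, hAΦ, map_smul, hBΦ, smul_smul, mul_comm]
  have hm : (((E:ℂ) - starRingEnd ℂ z) * ((E:ℂ) - z)) ≠ 0 := mul_ne_zero hzE' hzE
  have hSΦ : S Φ = (((E:ℂ) - starRingEnd ℂ z) * ((E:ℂ) - z))⁻¹ • Φ := by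
    have h1 : S (D Φ) = Φ := by
      have := congrFun (congrArg DFunLike.coe hSD) Φ
      simpa [ContinuousLinearMap.mul_apply] using this
    rw [hDΦ, map_smul] at h1
    have h2 : S Φ = (((E:ℂ) - starRingEnd ℂ z) * ((E:ℂ) - z))⁻¹ •
        ((((E:ℂ) - starRingEnd ℂ z) * ((E:ℂ) - z)) • S Φ) := by
      rw [smul_smul, inv_mul_cancel₀ hm, one_smul]
    rw [h2, h1]
  have h5 : ⟪Φ, v⟫_ℂ = 0 := by
    calc ⟪Φ, v⟫_ℂ = ⟪(star S) Φ, ψ⟫_ℂ := by exact (move_star S Φ ψ).symm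
      _ = ⟪S Φ, ψ⟫_ℂ := by rw [hstarS]
      _ = 0 := by rw [hSΦ, inner_smul_left, hperp, mul_zero]
  -- real spectrum
  have hspecR : ∀ x ∈ spectrum ℝ H, x = E ∨ E + g ≤ x := by
    intro x hx
    have hxC : (x:ℂ) ∈ spectrum ℂ H := by
      rw [← hH.spectrumRestricts.algebraMap_image]
      exact ⟨x, hx, rfl⟩
    rcases hspec _ hxC with h | ⟨x', hx', hle⟩
    · left; exact_mod_cast h
    · right
      have hxx : x = x' := by exact_mod_cast hx'
      rw [hxx]; exact hle
  have hgap := gap_bound H E g Φ hH hg hΦ hEΦ hsimp hspecR v h5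
  set y : F := H v - ((z.re:ℝ):ℂ) • v with hydef
  have hqim : (⟪v, y⟫_ℂ).im = 0 := by
    have h6 : starRingEnd ℂ ⟪v, H v⟫_ℂ = ⟪v, H v⟫_ℂ := by
      calc starRingEnd ℂ ⟪v, H v⟫_ℂ = ⟪H v, v⟫_ℂ := inner_conj_symm (H v) v
        _ = ⟪(star H) v, v⟫_ℂ := by rw [hH.star_eq]
        _ = ⟪v, H v⟫_ℂ := move_star H v v
    have h7 : (⟪v, H v⟫_ℂ).im = 0 := Complex.conj_eq_iff_im.mp h6
    have h8 : (⟪v, v⟫_ℂ).im = 0 := inner_self_im (𝕜 := ℂ) v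
    rw [hydef, inner_sub_right, inner_smul_right]
    simp [Complex.sub_im, Complex.mul_im, Complex.ofReal_im, Complex.ofReal_re, h7, h8]
    exact Or.inr (by rw [← Complex.ofReal_pow, Complex.ofReal_im])
  have hzsmul : z • v = ((z.re:ℂ)) • v + ((z.im:ℂ)*Complex.I) • v := by
    rw [← add_smul, Complex.re_add_im]
  have hzsmul' : (starRingEnd ℂ z) • v = ((z.re:ℂ)) • v - ((z.im:ℂ)*Complex.I) • v := by
    rw [← sub_smul]
    congr 1
    apply Complex.ext <;> simp
  have hAv : A v = y - ((z.im:ℂ) * Complex.I) • v := by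
    rw [hAdef]
    simp only [ContinuousLinearMap.sub_apply, ContinuousLinearMap.smul_apply,
      ContinuousLinearMap.one_apply]
    rw [hzsmul, hydef]
    abel
  have hBv : B v = y + ((z.im:ℂ) * Complex.I) • v := by
    rw [hBdef]
    simp only [ContinuousLinearMap.sub_apply, ContinuousLinearMap.smul_apply,
      ContinuousLinearMap.one_apply]
    rw [hzsmul', hydef]
    abel
  obtain ⟨e1, e2⟩ := expand_inner v y z.im hqim
  have hS_re : (⟪ψ, S ψ⟫_ℂ).re = ‖y‖^2 + z.im^2 * ‖v‖^2 := by rw [h2, hAv]; exact e1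
  have hR_re : (⟪ψ, R (R ψ)⟫_ℂ).re = ‖y‖^2 - z.im^2 * ‖v‖^2 := by rw [h4, hAv, hBv]; exact e2
  -- scalar estimates
  have hzre : z.re - E ≤ μ := by
    have h9 := Complex.re_le_norm (z - (E:ℂ))
    rw [hz] at h9
    simpa using h9
  have hb : |z.im| ≤ μ := by
    have h9 := Complex.abs_im_le_norm (z - (E:ℂ))
    rw [hz] at h9
    simpa using h9
  have hb2 : z.im^2 ≤ μ^2 := sq_le_sq' (by linarith [(abs_le.mp hb).1]) (abs_le.mp hb).2
  have hre_y : (g - μ) * ‖v‖^2 ≤ (⟪v, y⟫_ℂ).re := by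
    have h10 : (⟪v, v⟫_ℂ).re = ‖v‖^2 := inner_self_eq_norm_sq (𝕜 := ℂ) v
    rw [hydef, inner_sub_right, inner_smul_right]
    simp only [Complex.sub_re, Complex.mul_re, Complex.ofReal_re, Complex.ofReal_im,
      zero_mul, sub_zero, h10]
    nlinarith [hgap, sq_nonneg ‖v‖]
  have hcs : (⟪v, y⟫_ℂ).re ≤ ‖v‖ * ‖y‖ := by
    calc (⟪v, y⟫_ℂ).re ≤ ‖⟪v, y⟫_ℂ‖ := Complex.re_le_norm _
      _ = ‖⟪v, y⟫_ℂ‖ := rfl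
      _ ≤ ‖v‖ * ‖y‖ := norm_inner_le_norm v y
  have hg2 : 0 < g * (g - 2*μ) := mul_pos hg (by linarith)
  have hkey : (‖y‖^2 + z.im^2*‖v‖^2) * (g*(g-2*μ))
      ≤ ((g-μ)^2+μ^2) * (‖y‖^2 - z.im^2*‖v‖^2) :=
    main_scalar hg hμ hμg ‖v‖ ‖y‖ z.im (norm_nonneg v) (norm_nonneg y)
      (le_trans hre_y (by linarith [hcs])) hb2
  have hres : ‖y‖^2 - z.im^2*‖v‖^2 ≤ ‖⟪ψ, R (R ψ)⟫_ℂ‖ := by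
    calc ‖y‖^2 - z.im^2*‖v‖^2 = (⟪ψ, R (R ψ)⟫_ℂ).re := hR_re.symm
      _ ≤ ‖⟪ψ, R (R ψ)⟫_ℂ‖ := Complex.re_le_norm _
      _ = ‖⟪ψ, R (R ψ)⟫_ℂ‖ := rfl
  have hfinal : ‖y‖^2 + z.im^2*‖v‖^2
      ≤ ((g-μ)^2+μ^2)/(g*(g-2*μ)) * ‖⟪ψ, R (R ψ)⟫_ℂ‖ := by
    rw [div_mul_eq_mul_div, le_div_iff₀ hg2]
    calc (‖y‖^2 + z.im^2*‖v‖^2) * (g*(g-2*μ))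
        ≤ ((g-μ)^2+μ^2) * (‖y‖^2 - z.im^2*‖v‖^2) := hkey
      _ ≤ ((g-μ)^2+μ^2) * ‖⟪ψ, R (R ψ)⟫_ℂ‖ :=
          mul_le_mul_of_nonneg_left hres (by positivity)
  rw [Cfun_eq hg hμ hμg, hS_re]
  exact hfinal
end

section
/- Let H be a self-adjoint operator with simple isolated eigenvalue E₀, normalized eigenvector Φ₀, and spectral gap g > 0, and let V be bounded self-adjoint with ‖V‖ < g/4. Let γ be the circle of radius g/2 around E₀. Then P := (-1/(2πi)) ∮_γ (H + V - z)⁻¹ dz is a rank-one orthogonal projection, and the vector Φ := P Φ₀ is nonzero with ‖Φ - Φ₀‖ ≤ C ‖V‖/g for a universal constant C; in particular Φ is an eigenvector of H + V. -/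
open scoped InnerProductSpace

set_option linter.unusedSectionVars false

open Metric Complex

namespace Stmt8Aux

variable {F : Type} [NormedAddCommGroup F] [InnerProductSpace ℂ F] [CompleteSpace F]

/-- resolvent via cfc -/
noncomputable def res (B : F →L[ℂ] F) (z : ℂ) : F →L[ℂ] F :=
  cfc (fun x : ℂ => (x - z)⁻¹) B

lemma contOn_res_fun {z : ℂ} {s : Set ℂ} (hz : ∀ x ∈ s, x ≠ z) :
    ContinuousOn (fun x : ℂ => (x - z)⁻¹) s :=
  (continuousOn_id.sub continuousOn_const).inv₀ fun x hx => sub_ne_zero.2 (hz x hx)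

lemma res_inv (B : F →L[ℂ] F) (hB : IsStarNormal B) {z : ℂ}
    (hz : ∀ x ∈ spectrum ℂ B, x ≠ z) :
    res B z * (B - z • 1) = 1 ∧ (B - z • 1) * res B z = 1 := by
  have hfc : ContinuousOn (fun x : ℂ => (x - z)⁻¹) (spectrum ℂ B) := contOn_res_fun hz
  have hgc : ContinuousOn (fun x : ℂ => x - z) (spectrum ℂ B) :=
    continuousOn_id.sub continuousOn_const
  have hg : cfc (fun x : ℂ => x - z) B = B - z • 1 := by
    rw [cfc_sub (fun x : ℂ => x) (fun _ : ℂ => z) B continuousOn_id continuousOn_const,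
      cfc_id' ℂ B, cfc_const z B, Algebra.algebraMap_eq_smul_one]
  have heq : (spectrum ℂ B).EqOn (fun x => (x - z)⁻¹ * (x - z)) (fun _ => (1 : ℂ)) := by
    intro x hx
    exact inv_mul_cancel₀ (sub_ne_zero.2 (hz x hx))
  have heq' : (spectrum ℂ B).EqOn (fun x => (x - z) * (x - z)⁻¹) (fun _ => (1 : ℂ)) := by
    intro x hx
    exact mul_inv_cancel₀ (sub_ne_zero.2 (hz x hx))
  constructor
  · rw [res, ← hg, ← cfc_mul _ _ B hfc hgc, cfc_congr heq, cfc_const_one ℂ B]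
  · rw [res, ← hg, ← cfc_mul _ _ B hgc hfc, cfc_congr heq', cfc_const_one ℂ B]

lemma res_norm_le (B : F →L[ℂ] F) {z : ℂ} {d : ℝ} (hd : 0 < d)
    (hz : ∀ x ∈ spectrum ℂ B, d ≤ ‖x - z‖) : ‖res B z‖ ≤ d⁻¹ := by
  apply norm_cfc_le (by positivity)
  intro x hx
  rw [norm_inv]
  exact inv_anti₀ hd (hz x hx)

lemma not_mem_spectrum_add (Hop Vop : F →L[ℂ] F) (hH : IsSelfAdjoint Hop) {z : ℂ} {d : ℝ}
    (hd : 0 < d) (hz : ∀ x ∈ spectrum ℂ Hop, d ≤ ‖x - z‖) (hV : ‖Vop‖ < d) :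
    z ∉ spectrum ℂ (Hop + Vop) := by
  have hzne : ∀ x ∈ spectrum ℂ Hop, x ≠ z := by
    intro x hx h
    have := hz x hx
    rw [h, sub_self, norm_zero] at this
    linarith
  obtain ⟨h1, h2⟩ := res_inv Hop hH.isStarNormal hzne
  have hn : ‖res Hop z * Vop‖ < 1 := by
    calc ‖res Hop z * Vop‖ ≤ ‖res Hop z‖ * ‖Vop‖ := norm_mul_le _ _
    _ ≤ d⁻¹ * ‖Vop‖ :=
        mul_le_mul_of_nonneg_right (res_norm_le Hop hd hz) (norm_nonneg _)
    _ < d⁻¹ * d := by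
        have : (0:ℝ) < d⁻¹ := by positivity
        exact (mul_lt_mul_iff_right₀ this).2 hV
    _ = 1 := inv_mul_cancel₀ hd.ne'
  have hu2 : IsUnit (1 + res Hop z * Vop) := by
    have := (Units.oneSub (-(res Hop z * Vop)) (by rwa [norm_neg])).isUnit
    rwa [Units.val_oneSub, sub_neg_eq_add] at this
  have hu1 : IsUnit (Hop - z • 1) := ⟨⟨Hop - z • 1, res Hop z, h2, h1⟩, rfl⟩
  have key : Hop + Vop - z • 1 = (Hop - z • 1) * (1 + res Hop z * Vop) := by
    rw [mul_add, mul_one, ← mul_assoc, h2, one_mul]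
    abel
  rw [spectrum.notMem_iff]
  have h3 : (algebraMap ℂ (F →L[ℂ] F)) z - (Hop + Vop) = -(Hop + Vop - z • 1) := by
    rw [Algebra.algebraMap_eq_smul_one]
    abel
  rw [h3, key]
  exact (hu1.mul hu2).neg

lemma contOn_indicator {c : ℂ} {r : ℝ} {s : Set ℂ} (h : ∀ x ∈ s, ‖x - c‖ ≠ r) :
    ContinuousOn (fun x : ℂ => if ‖x - c‖ < r then (1 : ℂ) else 0) s := by
  intro x hx
  apply ContinuousAt.continuousWithinAt
  rcases lt_or_gt_of_ne (h x hx) with hlt | hgt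
  · have hU : IsOpen {y : ℂ | ‖y - c‖ < r} :=
      isOpen_lt (by fun_prop) continuous_const
    exact Filter.EventuallyEq.continuousAt <|
      Filter.eventuallyEq_of_mem (hU.mem_nhds hlt) fun y hy => if_pos hy
  · have hU : IsOpen {y : ℂ | r < ‖y - c‖} :=
      isOpen_lt continuous_const (by fun_prop)
    exact Filter.EventuallyEq.continuousAt <|
      Filter.eventuallyEq_of_mem (hU.mem_nhds hgt) fun y hy =>
        if_neg (not_lt.2 (le_of_lt hy))

section Swap

variable (B : F →L[ℂ] F) {c : ℂ} {r : ℝ}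

/-- the family of resolvent functions as a continuous map valued function on the sphere -/
noncomputable def fz (hne : ∀ x ∈ spectrum ℂ B, ∀ z ∈ sphere c r, x ≠ z)
    (z : sphere c r) : C(spectrum ℂ B, ℂ) :=
  ⟨fun x => ((x : ℂ) - (z : ℂ))⁻¹,
    (contOn_res_fun (fun x hx => hne x hx z z.2)).restrict⟩

lemma continuous_fz (hne : ∀ x ∈ spectrum ℂ B, ∀ z ∈ sphere c r, x ≠ z) :
    Continuous (fz B hne) := by
  haveI : CompactSpace (spectrum ℂ B) :=
    isCompact_iff_compactSpace.mp (spectrum.isCompact B)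
  apply ContinuousMap.continuous_of_continuous_uncurry
  apply Continuous.inv₀
  · exact (continuous_subtype_val.comp continuous_snd).sub
      (continuous_subtype_val.comp continuous_fst)
  · rintro ⟨z, x⟩
    exact sub_ne_zero.2 (hne x x.2 z z.2)

lemma res_eq_cfcL (hB : IsStarNormal B) (hne : ∀ x ∈ spectrum ℂ B, ∀ z ∈ sphere c r, x ≠ z)
    (z : sphere c r) : res B (z : ℂ) = cfcL (R := ℂ) hB (fz B hne z) :=
  cfc_eq_cfcL hB (contOn_res_fun fun x hx => hne x hx z z.2)

lemma continuousOn_res (hB : IsStarNormal B) (hne : ∀ x ∈ spectrum ℂ B, ∀ z ∈ sphere c r, x ≠ z) :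
    ContinuousOn (fun z => res B z) (sphere c r) := by
  rw [continuousOn_iff_continuous_restrict]
  have h : (sphere c r).domRestrict (fun z => res B z)
      = fun z : sphere c r => cfcL (R := ℂ) hB (fz B hne z) := by
    funext z
    exact res_eq_cfcL B hB hne z
  rw [h]
  exact (cfcL hB).continuous.comp (continuous_fz B hne)

lemma circleIntegral_res_eq (B : F →L[ℂ] F) (hB : IsStarNormal B) {c : ℂ} {r : ℝ} (hr : 0 < r)
    (hsp : ∀ x ∈ spectrum ℂ B, ‖x - c‖ ≠ r) :
    (∮ z in C(c, r), res B z)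
      = (-(2 * Real.pi * I) : ℂ) • cfc (fun x : ℂ => if ‖x - c‖ < r then (1 : ℂ) else 0) B := by
  haveI : CompactSpace (spectrum ℂ B) := isCompact_iff_compactSpace.mp (spectrum.isCompact B)
  have hne : ∀ x ∈ spectrum ℂ B, ∀ z ∈ sphere c r, x ≠ z := by
    intro x hx z hz h
    exact hsp x hx (by rw [h]; exact mem_sphere_iff_norm.mp hz)
  set χ : ℂ → ℂ := fun x => if ‖x - c‖ < r then (1 : ℂ) else 0 with hχdef
  have hχ : ContinuousOn χ (spectrum ℂ B) := contOn_indicator hsp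
  set χm : C(spectrum ℂ B, ℂ) := ⟨_, hχ.restrict⟩ with hχm
  set m : ℝ → sphere c r := fun θ => ⟨circleMap c r θ, circleMap_mem_sphere c hr.le θ⟩ with hm
  set G : ℝ → C(spectrum ℂ B, ℂ) := fun θ => deriv (circleMap c r) θ • fz B hne (m θ) with hG
  have hGcont : Continuous G := by
    apply Continuous.fun_smul
    · exact ((continuous_circleMap 0 r).mul continuous_const).congr
        fun θ => (deriv_circleMap c r θ).symm
    · exact (continuous_fz B hne).comp (Continuous.subtype_mk (continuous_circleMap c r) _)
  have h1 : (∮ z in C(c, r), res B z) = ∫ θ in (0)..(2 * Real.pi), cfcL (R := ℂ) hB (G θ) := by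
    rw [circleIntegral]
    congr 1
    funext θ
    rw [hG]
    simp only [map_smul]
    rw [← res_eq_cfcL B hB hne (m θ)]
  have hGint : IntervalIntegrable G MeasureTheory.volume 0 (2 * Real.pi) :=
    hGcont.intervalIntegrable _ _
  have h2 : (∫ θ in (0)..(2 * Real.pi), cfcL (R := ℂ) hB (G θ))
      = cfcL (R := ℂ) hB (∫ θ in (0)..(2 * Real.pi), G θ) :=
    ContinuousLinearMap.intervalIntegral_comp_comm _ hGint
  have h3 : (∫ θ in (0)..(2 * Real.pi), G θ) = (-(2 * Real.pi * I) : ℂ) • χm := by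
    ext x
    have hev : (ContinuousMap.evalCLM ℂ x) (∫ θ in (0)..(2 * Real.pi), G θ)
        = ∫ θ in (0)..(2 * Real.pi), (ContinuousMap.evalCLM ℂ x) (G θ) :=
      (ContinuousLinearMap.intervalIntegral_comp_comm _ hGint).symm
    have hev' : (∫ θ in (0)..(2 * Real.pi), G θ) x
        = ∮ z in C(c, r), ((x : ℂ) - z)⁻¹ := by
      rw [show (∫ θ in (0)..(2 * Real.pi), G θ) x
          = (ContinuousMap.evalCLM ℂ x) (∫ θ in (0)..(2 * Real.pi), G θ) from rfl, hev]
      rfl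
    rw [show ((((-(2 * Real.pi * I) : ℂ)) • χm) x) = (-(2 * Real.pi * I) : ℂ) * χm x from rfl]
    rw [hev']
    by_cases hx : ‖(x : ℂ) - c‖ < r
    · have hcongr : Set.EqOn (fun z => ((x : ℂ) - z)⁻¹)
          (fun z => (-1 : ℂ) • ((z - (x : ℂ))⁻¹)) (sphere c r) := by
        intro z _
        simp only [smul_eq_mul, neg_one_mul, ← inv_neg, neg_sub]
      rw [circleIntegral.integral_congr hr.le hcongr, circleIntegral.integral_smul,
        circleIntegral.integral_sub_inv_of_mem_ball (mem_ball_iff_norm.mpr hx)]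
      have : χm x = 1 := if_pos hx
      rw [this, mul_one]
      simp
    · have hgt : r < ‖(x : ℂ) - c‖ := lt_of_le_of_ne (not_lt.mp hx) (Ne.symm (hsp x x.2))
      have hzero : (∮ z in C(c, r), ((x : ℂ) - z)⁻¹) = 0 := by
        apply Complex.circleIntegral_eq_zero_of_differentiable_on_off_countable hr.le
          Set.countable_empty
        · apply ContinuousOn.inv₀
          · exact continuousOn_const.sub continuousOn_id
          · intro z hz
            refine sub_ne_zero.2 fun h => ?_
            rw [← h] at hz
            exact absurd (mem_closedBall_iff_norm.mp hz) (not_le.mpr hgt)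
        · intro z hz
          refine DifferentiableAt.inv ((differentiableAt_const _).sub differentiableAt_id) ?_
          refine sub_ne_zero.2 fun h => ?_
          rw [← h] at hz
          exact absurd (mem_closedBall_iff_norm.mp (Metric.ball_subset_closedBall hz.1))
            (not_le.mpr hgt)
      rw [hzero]
      have : χm x = 0 := if_neg hx
      rw [this, mul_zero]
  rw [h1, h2, h3, map_smul]
  congr 1
  exact (cfc_eq_cfcL hB hχ).symm

end Swap


end Stmt8Aux

namespace Stmt8Aux

variable {F : Type} [NormedAddCommGroup F] [InnerProductSpace ℂ F] [CompleteSpace F]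

noncomputable def projMap (P Q : F →L[ℂ] F) :
    LinearMap.range (P : F →ₗ[ℂ] F) →ₗ[ℂ] LinearMap.range (Q : F →ₗ[ℂ] F) :=
  LinearMap.codRestrict _ ((Q : F →ₗ[ℂ] F).domRestrict (LinearMap.range (P : F →ₗ[ℂ] F)))
    fun u => LinearMap.mem_range_self _ _

lemma projMap_injective {P Q : F →L[ℂ] F} (hP : P * P = P) (h : ‖P - Q‖ < 1) :
    Function.Injective (projMap P Q) := by
  rw [← LinearMap.ker_eq_bot, LinearMap.ker_eq_bot']
  intro u hu
  have hQu : Q (u : F) = 0 := by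
    have := congrArg (Subtype.val) hu
    exact this
  have hPu : P (u : F) = (u : F) := by
    obtain ⟨y, hy⟩ := u.2
    have : P ((P : F →ₗ[ℂ] F) y) = (P : F →ₗ[ℂ] F) y := by
      have := congrFun (congrArg (fun (T : F →L[ℂ] F) => (T : F → F)) hP) y
      simpa [ContinuousLinearMap.mul_apply] using this
    rw [← hy]
    exact this
  have hle : ‖(u : F)‖ ≤ ‖P - Q‖ * ‖(u : F)‖ := by
    have h1 : (P - Q) (u : F) = (u : F) := by
      rw [ContinuousLinearMap.sub_apply, hQu, sub_zero, hPu]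
    calc ‖(u : F)‖ = ‖(P - Q) (u : F)‖ := by rw [h1]
    _ ≤ ‖P - Q‖ * ‖(u : F)‖ := (P - Q).le_opNorm _
  have hnorm : ‖(u : F)‖ = 0 := by
    by_contra hne
    have hpos : 0 < ‖(u : F)‖ := lt_of_le_of_ne (norm_nonneg _) (Ne.symm hne)
    nlinarith
  exact Subtype.ext (norm_eq_zero.mp hnorm)

end Stmt8Aux

open Metric Complex Stmt8Aux in
set_option maxHeartbeats 2000000 in
/-- Riesz-projection step of iterative analytic perturbation theory.
`H` has a simple isolated eigenvalue `E₀` with gap `g` and normalized eigenvector `Φ₀`;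
`V` is a bounded self-adjoint perturbation with `‖V‖ < g/4`.  With `R z = (H + V - z)⁻¹`
on the circle `γ` of radius `g/2` around `E₀`, `P := -(2πi)⁻¹ ∮_γ R z dz` is a rank-one
orthogonal projection, `Φ := P Φ₀ ≠ 0`, `‖Φ - Φ₀‖ ≤ C‖V‖/g` for a universal constant
`C`, and `Φ` is an eigenvector of `H + V`. -/
theorem stmt8 : ∃ C : ℝ, 0 < C ∧
    ∀ (F : Type) [NormedAddCommGroup F] [InnerProductSpace ℂ F] [CompleteSpace F]
      (H V : F →L[ℂ] F) (E₀ g : ℝ) (Φ₀ : F),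
      IsSelfAdjoint H → IsSelfAdjoint V → 0 < g →
      ‖Φ₀‖ = 1 → H Φ₀ = (E₀ : ℂ) • Φ₀ →
      (∀ v : F, H v = (E₀ : ℂ) • v → ∃ c : ℂ, v = c • Φ₀) →
      (∀ w ∈ spectrum ℂ H, w ≠ (E₀ : ℂ) → g ≤ ‖w - (E₀ : ℂ)‖) →
      ‖V‖ < g / 4 →
      ∀ R : ℂ → (F →L[ℂ] F),
        (∀ z : ℂ, ‖z - (E₀ : ℂ)‖ = g / 2 →
          R z * (H + V - z • 1) = 1 ∧ (H + V - z • 1) * R z = 1) →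
        ∀ P : F →L[ℂ] F,
          P = (-(2 * Real.pi * Complex.I)⁻¹ : ℂ) • (∮ z in C((E₀ : ℂ), g / 2), R z) →
          (P * P = P ∧ IsSelfAdjoint P ∧
            Module.finrank ℂ (LinearMap.range (P : F →ₗ[ℂ] F)) = 1) ∧
          P Φ₀ ≠ 0 ∧ ‖P Φ₀ - Φ₀‖ ≤ C * ‖V‖ / g ∧
          ∃ e : ℂ, (H + V) (P Φ₀) = e • P Φ₀ := by
  refine ⟨4, by norm_num, ?_⟩
  intro F _ _ _ H V E₀ g Φ₀ hH hV hg hΦ₀ hHΦ₀ hsimple hgap hVg R hR P hP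
  have hπ : (2 * Real.pi * Complex.I : ℂ) ≠ 0 := by
    simp [Real.pi_ne_zero, Complex.I_ne_zero]
  have hscal : (-(2 * Real.pi * Complex.I)⁻¹ : ℂ) * (-(2 * Real.pi * Complex.I)) = 1 := by
    rw [neg_mul_neg, inv_mul_cancel₀ hπ]
  set A := H + V with hA
  have hAsa : IsSelfAdjoint A := hH.add hV
  have hg2 : (0:ℝ) < g / 2 := by linarith
  have hVnn : (0:ℝ) ≤ ‖V‖ := norm_nonneg _
  -- spectrum facts for H
  have hσH : ∀ x ∈ spectrum ℂ H, x = (E₀:ℂ) ∨ g ≤ ‖x - (E₀:ℂ)‖ := fun x hx =>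
    (eq_or_ne x (E₀:ℂ)).imp id (fun h => hgap x hx h)
  have hσHgap : ∀ x ∈ spectrum ℂ H, ‖x - (E₀:ℂ)‖ ≠ g / 2 := by
    intro x hx
    rcases hσH x hx with rfl | hbig
    · rw [sub_self, norm_zero]; intro h; linarith
    · intro h; rw [h] at hbig; linarith
  -- spectrum facts for A
  have hannulus : ∀ z : ℂ, g/4 ≤ ‖z - (E₀:ℂ)‖ → ‖z - (E₀:ℂ)‖ ≤ 3*g/4 →
      z ∉ spectrum ℂ A := by
    intro z hlo hhi
    refine not_mem_spectrum_add H V hH (d := g/4) (by linarith) ?_ hVg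
    intro y hy
    rcases hσH y hy with rfl | hbig
    · rw [norm_sub_rev]; exact hlo
    · have h1 : ‖y - (E₀:ℂ)‖ - ‖z - (E₀:ℂ)‖ ≤ ‖(y - (E₀:ℂ)) - (z - (E₀:ℂ))‖ :=
        norm_sub_norm_le _ _
      have h2 : (y - (E₀:ℂ)) - (z - (E₀:ℂ)) = y - z := by ring
      rw [h2] at h1
      linarith
  have hσA : ∀ x ∈ spectrum ℂ A, ‖x - (E₀:ℂ)‖ < g/4 ∨ 3*g/4 < ‖x - (E₀:ℂ)‖ := by
    intro x hx
    by_contra hcon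
    push_neg at hcon
    exact hannulus x hcon.1 hcon.2 hx
  have hσAgap : ∀ x ∈ spectrum ℂ A, ‖x - (E₀:ℂ)‖ ≠ g / 2 := by
    intro x hx h
    rcases hσA x hx with h' | h' <;> rw [h] at h' <;> linarith
  have hAsphere : ∀ z ∈ sphere (E₀:ℂ) (g/2), ∀ x ∈ spectrum ℂ A, g/4 ≤ ‖x - z‖ := by
    intro z hz x hx
    have hzn : ‖z - (E₀:ℂ)‖ = g/2 := mem_sphere_iff_norm.mp hz
    have h2 : (z - (E₀:ℂ)) - (x - (E₀:ℂ)) = z - x := by ring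
    have h2' : (x - (E₀:ℂ)) - (z - (E₀:ℂ)) = x - z := by ring
    rcases hσA x hx with hlt | hgt
    · have h1 : ‖z - (E₀:ℂ)‖ - ‖x - (E₀:ℂ)‖ ≤ ‖(z - (E₀:ℂ)) - (x - (E₀:ℂ))‖ :=
        norm_sub_norm_le _ _
      rw [h2] at h1
      rw [norm_sub_rev]
      linarith
    · have h1 : ‖x - (E₀:ℂ)‖ - ‖z - (E₀:ℂ)‖ ≤ ‖(x - (E₀:ℂ)) - (z - (E₀:ℂ))‖ :=
        norm_sub_norm_le _ _
      rw [h2'] at h1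
      linarith
  have hHsphere : ∀ z ∈ sphere (E₀:ℂ) (g/2), ∀ x ∈ spectrum ℂ H, g/2 ≤ ‖x - z‖ := by
    intro z hz x hx
    have hzn : ‖z - (E₀:ℂ)‖ = g/2 := mem_sphere_iff_norm.mp hz
    rcases hσH x hx with rfl | hbig
    · rw [norm_sub_rev, hzn]
    · have h1 : ‖x - (E₀:ℂ)‖ - ‖z - (E₀:ℂ)‖ ≤ ‖(x - (E₀:ℂ)) - (z - (E₀:ℂ))‖ :=
        norm_sub_norm_le _ _
      have h2 : (x - (E₀:ℂ)) - (z - (E₀:ℂ)) = x - z := by ring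
      rw [h2] at h1
      linarith
  have hAne : ∀ x ∈ spectrum ℂ A, ∀ z ∈ sphere (E₀:ℂ) (g/2), x ≠ z := by
    intro x hx z hz h
    have := hAsphere z hz x hx
    rw [h, sub_self, norm_zero] at this
    linarith
  have hHne : ∀ x ∈ spectrum ℂ H, ∀ z ∈ sphere (E₀:ℂ) (g/2), x ≠ z := by
    intro x hx z hz h
    have := hHsphere z hz x hx
    rw [h, sub_self, norm_zero] at this
    linarith
  -- R agrees with res A on the circle
  have hRres : Set.EqOn R (res A) (sphere (E₀:ℂ) (g/2)) := by
    intro z hz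
    have hzn : ‖z - (E₀:ℂ)‖ = g/2 := mem_sphere_iff_norm.mp hz
    obtain ⟨h1, _⟩ := hR z hzn
    obtain ⟨_, h2'⟩ := res_inv A hAsa.isStarNormal (fun x hx => hAne x hx z hz)
    calc R z = R z * ((A - z • 1) * res A z) := by rw [h2', mul_one]
    _ = (R z * (A - z • 1)) * res A z := by rw [mul_assoc]
    _ = res A z := by rw [h1, one_mul]
  set χ : ℂ → ℂ := fun x => if ‖x - (E₀:ℂ)‖ < g/2 then (1:ℂ) else 0 with hχdef
  have hχA : ContinuousOn χ (spectrum ℂ A) := contOn_indicator hσAgap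
  have hχH : ContinuousOn χ (spectrum ℂ H) := contOn_indicator hσHgap
  have hPcfc : P = cfc χ A := by
    rw [hP, circleIntegral.integral_congr hg2.le hRres,
      circleIntegral_res_eq A hAsa.isStarNormal hg2 hσAgap, smul_smul, hscal, one_smul]
  set P₀ : F →L[ℂ] F := cfc χ H with hP₀def
  have hP₀int : P₀ = (-(2 * Real.pi * Complex.I)⁻¹ : ℂ) • (∮ z in C((E₀:ℂ), g/2), res H z) := by
    rw [circleIntegral_res_eq H hH.isStarNormal hg2 hσHgap, smul_smul, hscal, one_smul]
  -- idempotents and selfadjointness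
  have hχmul : (fun x : ℂ => χ x * χ x) = χ := by
    funext x
    simp only [hχdef]
    by_cases h : ‖x - (E₀:ℂ)‖ < g/2
    · rw [if_pos h, one_mul]
    · rw [if_neg h, zero_mul]
  have hPP : P * P = P := by
    rw [hPcfc, ← cfc_mul χ χ A hχA hχA, hχmul]
  have hP₀P₀ : P₀ * P₀ = P₀ := by
    rw [hP₀def, ← cfc_mul χ χ H hχH hχH, hχmul]
  have hstar : (fun x : ℂ => star (χ x)) = χ := by
    funext x
    simp only [hχdef]
    by_cases h : ‖x - (E₀:ℂ)‖ < g/2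
    · rw [if_pos h]; exact star_one ℂ
    · rw [if_neg h]; exact star_zero ℂ
  have hPsa : IsSelfAdjoint P := by
    rw [hPcfc, IsSelfAdjoint, ← cfc_star χ A, hstar]
  -- P₀ Φ₀ = Φ₀
  have hΦ₀ne : Φ₀ ≠ 0 := by
    intro h
    rw [h, norm_zero] at hΦ₀
    norm_num at hΦ₀
  have hresHΦ : ∀ z ∈ sphere (E₀:ℂ) (g/2), res H z Φ₀ = ((E₀:ℂ) - z)⁻¹ • Φ₀ := by
    intro z hz
    have hzn : ‖z - (E₀:ℂ)‖ = g/2 := mem_sphere_iff_norm.mp hz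
    have hzE : ((E₀:ℂ) - z) ≠ 0 := by
      intro h
      rw [show z - (E₀:ℂ) = -((E₀:ℂ) - z) by ring, h, neg_zero, norm_zero] at hzn
      linarith
    obtain ⟨h1, _⟩ := res_inv H hH.isStarNormal (fun x hx => hHne x hx z hz)
    have hv : (H - z • 1) (((E₀:ℂ) - z)⁻¹ • Φ₀) = Φ₀ := by
      rw [map_smul, ContinuousLinearMap.sub_apply, hHΦ₀]
      rw [ContinuousLinearMap.smul_apply, ContinuousLinearMap.one_apply]
      rw [← sub_smul, smul_smul, inv_mul_cancel₀ hzE, one_smul]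
    calc res H z Φ₀ = res H z ((H - z • 1) (((E₀:ℂ) - z)⁻¹ • Φ₀)) := by rw [hv]
    _ = (res H z * (H - z • 1)) (((E₀:ℂ) - z)⁻¹ • Φ₀) := rfl
    _ = ((E₀:ℂ) - z)⁻¹ • Φ₀ := by rw [h1, ContinuousLinearMap.one_apply]
  have hiH : CircleIntegrable (res H) (E₀:ℂ) (g/2) :=
    (continuousOn_res H hH.isStarNormal hHne).circleIntegrable hg2.le
  have hiA : CircleIntegrable (res A) (E₀:ℂ) (g/2) :=
    (continuousOn_res A hAsa.isStarNormal hAne).circleIntegrable hg2.le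
  have happ : (∮ z in C((E₀:ℂ), g/2), res H z) Φ₀ = ∮ z in C((E₀:ℂ), g/2), res H z Φ₀ := by
    rw [circleIntegral, circleIntegral,
      ContinuousLinearMap.intervalIntegral_apply ((circleIntegrable_iff _).mp hiH) Φ₀]
    exact intervalIntegral.integral_congr fun θ _ => rfl
  have hcenter : (∮ z in C((E₀:ℂ), g/2), ((E₀:ℂ) - z)⁻¹) = -(2 * Real.pi * Complex.I) := by
    have hcongr : Set.EqOn (fun z : ℂ => ((E₀:ℂ) - z)⁻¹)
        (fun z => (-1:ℂ) • ((z - (E₀:ℂ))⁻¹)) (sphere (E₀:ℂ) (g/2)) := by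
      intro z _
      simp only [smul_eq_mul, neg_one_mul, ← inv_neg, neg_sub]
    rw [circleIntegral.integral_congr hg2.le hcongr, circleIntegral.integral_smul,
      circleIntegral.integral_sub_center_inv _ (ne_of_gt hg2)]
    simp
  have hP₀Φ : P₀ Φ₀ = Φ₀ := by
    rw [hP₀int, ContinuousLinearMap.smul_apply, happ,
      circleIntegral.integral_congr hg2.le hresHΦ,
      circleIntegral.integral_smul_const, hcenter, smul_smul, hscal, one_smul]
  -- range of P₀
  have hHP₀mul : H * P₀ = (E₀:ℂ) • P₀ := by
    have e1 : cfc (fun x : ℂ => id x * χ x) H = H * cfc χ H := by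
      rw [cfc_mul _ _ H continuousOn_id hχH, cfc_id ℂ H hH.isStarNormal]
    rw [hP₀def, ← e1]
    have heq : (spectrum ℂ H).EqOn (fun x => id x * χ x) (fun x => (E₀:ℂ) • χ x) := by
      intro x hx
      rcases hσH x hx with rfl | hbig
      · simp [smul_eq_mul]
      · have hzero : χ x = 0 := if_neg (by intro h; linarith)
        show id x * χ x = (E₀:ℂ) • χ x
        rw [hzero, mul_zero, smul_zero]
    rw [cfc_congr heq, cfc_smul (E₀:ℂ) χ H hχH]
  have hHP₀ : ∀ v : F, H (P₀ v) = (E₀:ℂ) • (P₀ v) := by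
    intro v
    calc H (P₀ v) = (H * P₀) v := (ContinuousLinearMap.mul_apply H P₀ v).symm
    _ = ((E₀:ℂ) • P₀) v := by rw [hHP₀mul]
    _ = (E₀:ℂ) • (P₀ v) := ContinuousLinearMap.smul_apply _ _ _
  have hrangeP₀ : LinearMap.range (P₀ : F →ₗ[ℂ] F) = Submodule.span ℂ {Φ₀} := by
    apply le_antisymm
    · rintro x ⟨v, rfl⟩
      obtain ⟨cc, hcc⟩ := hsimple _ (hHP₀ v)
      rw [Submodule.mem_span_singleton]
      exact ⟨cc, hcc.symm⟩
    · rw [Submodule.span_le, Set.singleton_subset_iff]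
      exact LinearMap.mem_range.mpr ⟨Φ₀, hP₀Φ⟩
  haveI hfinP₀ : FiniteDimensional ℂ (LinearMap.range (P₀ : F →ₗ[ℂ] F)) := by
    rw [hrangeP₀]; infer_instance
  have hrkP₀ : Module.finrank ℂ (LinearMap.range (P₀ : F →ₗ[ℂ] F)) = 1 := by
    rw [hrangeP₀]; exact finrank_span_singleton hΦ₀ne
  -- norm estimate for P - P₀
  have hresAnorm : ∀ z ∈ sphere (E₀:ℂ) (g/2), ‖res A z‖ ≤ (g/4)⁻¹ := fun z hz =>
    res_norm_le A (by linarith) (hAsphere z hz)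
  have hresHnorm : ∀ z ∈ sphere (E₀:ℂ) (g/2), ‖res H z‖ ≤ (g/2)⁻¹ := fun z hz =>
    res_norm_le H (by linarith) (hHsphere z hz)
  have hdiffbound : ∀ z ∈ sphere (E₀:ℂ) (g/2), ‖res A z - res H z‖ ≤ 8 * ‖V‖ / g^2 := by
    intro z hz
    obtain ⟨hA1, _⟩ := res_inv A hAsa.isStarNormal (fun x hx => hAne x hx z hz)
    obtain ⟨_, hH2⟩ := res_inv H hH.isStarNormal (fun x hx => hHne x hx z hz)
    have hid : res A z - res H z = -(res A z * V * res H z) := by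
      have e1 : res A z * ((H - z • 1) * res H z) = res A z := by rw [hH2, mul_one]
      have e2 : res A z * ((A - z • 1) * res H z) = res H z := by
        rw [← mul_assoc, hA1, one_mul]
      have e3 : A - z • 1 = (H - z • 1) + V := by rw [hA]; abel
      calc res A z - res H z
          = res A z * ((H - z • 1) * res H z) - res A z * (((H - z • 1) + V) * res H z) := by
            rw [e1, ← e3, e2]
      _ = -(res A z * V * res H z) := by noncomm_ring
    rw [hid, norm_neg]
    calc ‖res A z * V * res H z‖ ≤ ‖res A z * V‖ * ‖res H z‖ := norm_mul_le _ _
    _ ≤ (‖res A z‖ * ‖V‖) * ‖res H z‖ :=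
        mul_le_mul_of_nonneg_right (norm_mul_le _ _) (norm_nonneg _)
    _ ≤ ((g/4)⁻¹ * ‖V‖) * (g/2)⁻¹ := by
        apply mul_le_mul (mul_le_mul_of_nonneg_right (hresAnorm z hz) hVnn)
          (hresHnorm z hz) (norm_nonneg _)
        positivity
    _ = 8 * ‖V‖ / g^2 := by field_simp; ring
  have hnrm : ‖(-(2 * Real.pi * Complex.I)⁻¹ : ℂ)‖ = (2 * Real.pi)⁻¹ := by
    rw [norm_neg, norm_inv]
    congr 1
    rw [norm_mul, norm_mul, Complex.norm_I, mul_one]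
    simp [Complex.norm_real, _root_.abs_of_nonneg Real.pi_pos.le]
  have hPdiff : ‖P - P₀‖ ≤ 4 * ‖V‖ / g := by
    have hsubeq : P - P₀ = (-(2 * Real.pi * Complex.I)⁻¹ : ℂ) •
        (∮ z in C((E₀:ℂ), g/2), (res A z - res H z)) := by
      rw [hP, hP₀int, circleIntegral.integral_congr hg2.le hRres, ← smul_sub,
        circleIntegral.integral_sub hiA hiH]
    rw [hsubeq, norm_smul, hnrm]
    have hint_le : ‖∮ z in C((E₀:ℂ), g/2), (res A z - res H z)‖
        ≤ 2 * Real.pi * (g/2) * (8 * ‖V‖ / g^2) :=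
      circleIntegral.norm_integral_le_of_norm_le_const hg2.le hdiffbound
    calc (2 * Real.pi)⁻¹ * ‖∮ z in C((E₀:ℂ), g/2), (res A z - res H z)‖
        ≤ (2 * Real.pi)⁻¹ * (2 * Real.pi * (g/2) * (8 * ‖V‖ / g^2)) := by
          apply mul_le_mul_of_nonneg_left hint_le
          positivity
    _ = 4 * ‖V‖ / g := by
          have : Real.pi ≠ 0 := Real.pi_ne_zero
          field_simp
          ring
  -- conclusion pieces
  have hPΦdiff : ‖P Φ₀ - Φ₀‖ ≤ 4 * ‖V‖ / g := by
    have h1 : P Φ₀ - Φ₀ = (P - P₀) Φ₀ := by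
      rw [ContinuousLinearMap.sub_apply, hP₀Φ]
    rw [h1]
    calc ‖(P - P₀) Φ₀‖ ≤ ‖P - P₀‖ * ‖Φ₀‖ := (P - P₀).le_opNorm _
    _ = ‖P - P₀‖ := by rw [hΦ₀, mul_one]
    _ ≤ 4 * ‖V‖ / g := hPdiff
  have hlt1 : 4 * ‖V‖ / g < 1 := by
    rw [div_lt_one hg]
    linarith
  have hPΦne : P Φ₀ ≠ 0 := by
    intro h
    rw [h, zero_sub, norm_neg, hΦ₀] at hPΦdiff
    linarith
  -- rank of P
  have hPdiff1 : ‖P - P₀‖ < 1 := lt_of_le_of_lt hPdiff hlt1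
  have hP₀diff1 : ‖P₀ - P‖ < 1 := by rwa [norm_sub_rev]
  have hinj1 : Function.Injective (projMap P P₀) := projMap_injective hPP hPdiff1
  have hinj2 : Function.Injective (projMap P₀ P) := projMap_injective hP₀P₀ hP₀diff1
  haveI hfinP : FiniteDimensional ℂ (LinearMap.range (P : F →ₗ[ℂ] F)) :=
    FiniteDimensional.of_injective (projMap P P₀) hinj1
  have hrkP : Module.finrank ℂ (LinearMap.range (P : F →ₗ[ℂ] F)) = 1 := by
    apply le_antisymm
    · rw [← hrkP₀]
      exact LinearMap.finrank_le_finrank_of_injective hinj1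
    · rw [← hrkP₀]
      exact LinearMap.finrank_le_finrank_of_injective hinj2
  -- eigenvector
  have hcomm : A * P = P * A := by
    have e1 : cfc (fun x : ℂ => id x * χ x) A = A * cfc χ A := by
      rw [cfc_mul _ _ A continuousOn_id hχA, cfc_id ℂ A hAsa.isStarNormal]
    have e2 : cfc (fun x : ℂ => χ x * id x) A = cfc χ A * A := by
      rw [cfc_mul _ _ A hχA continuousOn_id, cfc_id ℂ A hAsa.isStarNormal]
    rw [hPcfc, ← e1, ← e2]
    exact cfc_congr fun x _ => mul_comm (id x) (χ x)
  have hrangeP : Submodule.span ℂ {P Φ₀} = LinearMap.range (P : F →ₗ[ℂ] F) := by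
    apply Submodule.eq_of_le_of_finrank_eq
    · rw [Submodule.span_le, Set.singleton_subset_iff]
      exact LinearMap.mem_range.mpr ⟨Φ₀, rfl⟩
    · rw [finrank_span_singleton hPΦne, hrkP]
  have hmem : A (P Φ₀) ∈ Submodule.span ℂ {P Φ₀} := by
    rw [hrangeP]
    have h1 : A (P Φ₀) = P (A Φ₀) := by
      calc A (P Φ₀) = (A * P) Φ₀ := (ContinuousLinearMap.mul_apply A P Φ₀).symm
      _ = (P * A) Φ₀ := by rw [hcomm]
      _ = P (A Φ₀) := ContinuousLinearMap.mul_apply P A Φ₀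
    rw [h1]
    exact LinearMap.mem_range.mpr ⟨A Φ₀, rfl⟩
  obtain ⟨e, he⟩ := Submodule.mem_span_singleton.mp hmem
  exact ⟨⟨hPP, hPsa, hrkP⟩, hPΦne, hPΦdiff, ⟨e, he.symm⟩⟩
end

section
/- Let H be self-adjoint, bounded below, with simple lowest eigenvalue E and spectral gap g > 0 above E, and let Φ be the normalized ground state. Suppose ψ ⊥ Φ and that for some M > 0 and all z on the circle |z - E| = μ with 0 < μ < g/3: |⟨ψ, (H - z)⁻² ψ⟩| ≤ M. Then ‖(H - z)⁻¹ ψ‖ ≤ (C M)^{1/2} for all such z, where C depends only on μ/g. -/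
open scoped InnerProductSpace

lemma arith_aux14 (a b : ℝ) (hb : 2*|b| < a) :
    (a^2 + b^2)⁻¹ ≤ 5/3 * ((a^2 - b^2)/(a^2+b^2)^2) := by
  have hb0 : (0:ℝ) ≤ |b| := abs_nonneg b
  have ha : 0 < a := lt_of_le_of_lt (by positivity) hb
  have h4 : 4*b^2 < a^2 := by nlinarith [sq_abs b]
  have hn : 0 < a^2 + b^2 := by positivity
  have hkey : 5/3 * ((a^2-b^2)/(a^2+b^2)^2) - (a^2+b^2)⁻¹
      = (2/3*a^2 - 8/3*b^2)/(a^2+b^2)^2 := by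
    field_simp
    ring
  have hnum : (0:ℝ) ≤ 2/3*a^2 - 8/3*b^2 := by nlinarith
  have : (0:ℝ) ≤ (2/3*a^2 - 8/3*b^2)/(a^2+b^2)^2 := by positivity
  linarith

set_option maxHeartbeats 1000000 in
/-- the inductive bound `|⟨ψ, (H - z)⁻² ψ⟩| ≤ M` on the circle
`|z - E| = μ < g/3`, for `ψ` orthogonal to the ground state, yields the norm bound
`‖(H - z)⁻¹ ψ‖ ≤ (C M)^{1/2}` with `C` depending only on `μ/g`. -/
theorem stmt14 : ∃ C : ℝ → ℝ, (∀ t, 0 < C t) ∧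
    ∀ (F : Type) [NormedAddCommGroup F] [InnerProductSpace ℂ F] [CompleteSpace F]
      (H : F →L[ℂ] F) (E g μ M : ℝ) (Φ ψ : F),
      IsSelfAdjoint H → 0 < g →
      ‖Φ‖ = 1 → H Φ = (E : ℂ) • Φ →
      (∀ v : F, H v = (E : ℂ) • v → ∃ c : ℂ, v = c • Φ) →
      (∀ w ∈ spectrum ℂ H, w = (E : ℂ) ∨ ∃ x : ℝ, w = (x : ℂ) ∧ E + g ≤ x) →
      (∀ w ∈ spectrum ℂ H, E ≤ w.re) →
      ⟪Φ, ψ⟫_ℂ = 0 →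
      0 < μ → μ < g / 3 → 0 < M →
      ∀ R : ℂ → (F →L[ℂ] F),
        (∀ z : ℂ, ‖z - (E : ℂ)‖ = μ →
          R z * (H - z • 1) = 1 ∧ (H - z • 1) * R z = 1) →
        (∀ z : ℂ, ‖z - (E : ℂ)‖ = μ → ‖⟪ψ, R z (R z ψ)⟫_ℂ‖ ≤ M) →
        ∀ z : ℂ, ‖z - (E : ℂ)‖ = μ → ‖R z ψ‖ ≤ Real.sqrt (C (μ / g) * M) := by
  classical
  refine ⟨fun _ => 5/3, fun _ => by norm_num, ?_⟩
  intro F _ _ _ H E g μ M Φ ψ hH hg hΦn hΦe hsimple hspec _hre hortho hμ hμg hM R hR hM2 z hz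
  haveI hHsn : IsStarNormal H := hH.isStarNormal
  have hμg' : μ < g := by linarith
  set zb : ℂ := (starRingEnd ℂ) z with hzbdef
  have hzbE : ‖zb - (E:ℂ)‖ = μ := by
    calc ‖zb - (E:ℂ)‖ = ‖(starRingEnd ℂ) (z - (E:ℂ))‖ := by
          rw [map_sub, hzbdef, Complex.conj_ofReal]
      _ = ‖z - (E:ℂ)‖ := by rw [RCLike.norm_conj]
      _ = μ := hz
  -- spectrum points avoid z and zb, and are real
  have hreal : ∀ w ∈ spectrum ℂ H, (starRingEnd ℂ) w = w := by
    intro w hw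
    rcases hspec w hw with h | ⟨x, rfl, _⟩
    · rw [h]; exact Complex.conj_ofReal E
    · exact Complex.conj_ofReal x
  have hne : ∀ u : ℂ, ‖u - (E:ℂ)‖ = μ → ∀ w ∈ spectrum ℂ H, w ≠ u := by
    intro u hu w hw hwu
    rcases hspec w hw with h | ⟨x, hx, hx2⟩
    · rw [hwu] at h; rw [h] at hu; simp at hu; linarith
    · rw [hwu] at hx; rw [hx] at hu
      rw [show ((x:ℂ) - (E:ℂ)) = ((x - E : ℝ) : ℂ) by push_cast; ring] at hu
      rw [Complex.norm_real, Real.norm_eq_abs] at hu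
      have : g ≤ |x - E| := by rw [abs_of_nonneg (by linarith)]; linarith
      linarith
  have hnz : ∀ w ∈ spectrum ℂ H, w - z ≠ 0 := fun w hw =>
    sub_ne_zero.2 (hne z hz w hw)
  have hnzb : ∀ w ∈ spectrum ℂ H, w - zb ≠ 0 := fun w hw =>
    sub_ne_zero.2 (hne zb hzbE w hw)
  -- the functions
  set r : ℂ → ℂ := fun w => (w - z)⁻¹ with hrdef
  set s : ℂ → ℂ := fun w => (w - zb)⁻¹ with hsdef
  have hcr : ContinuousOn r (spectrum ℂ H) :=
    ContinuousOn.inv₀ (by fun_prop) hnz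
  have hcs : ContinuousOn s (spectrum ℂ H) :=
    ContinuousOn.inv₀ (by fun_prop) hnzb
  -- cfc of r is the resolvent
  have hid : cfc (fun w : ℂ => w - z) H = H - z • 1 := by
    rw [cfc_sub (fun w : ℂ => w) (fun _ : ℂ => z) H (by fun_prop) (by fun_prop),
      cfc_id' ℂ H, cfc_const z H, Algebra.algebraMap_eq_smul_one]
  have hmul1 : (H - z • 1) * cfc r H = 1 := by
    rw [← hid, ← cfc_mul (fun w : ℂ => w - z) r H (by fun_prop) hcr]
    rw [cfc_congr (g := fun _ : ℂ => (1:ℂ)) fun w hw => mul_inv_cancel₀ (hnz w hw)]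
    exact cfc_const_one ℂ H
  have hrR : cfc r H = R z := by
    calc cfc r H = (R z * (H - z • 1)) * cfc r H := by rw [(hR z hz).1, one_mul]
    _ = R z * ((H - z • 1) * cfc r H) := mul_assoc _ _ _
    _ = R z := by rw [hmul1, mul_one]
  have hstar : star (R z) = cfc s H := by
    rw [← hrR, ← cfc_star r H]
    refine cfc_congr fun w hw => ?_
    show star ((w - z)⁻¹) = (w - zb)⁻¹
    rw [show (star ((w - z)⁻¹) : ℂ) = (starRingEnd ℂ) ((w - z)⁻¹) from rfl,
      map_inv₀, map_sub, hreal w hw]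
  -- χ and the projection
  set χ : ℂ → ℂ := fun w => ((max 0 (min 1 (2 - 3*‖w - (E:ℂ)‖/g)) : ℝ) : ℂ) with hχdef
  have hχc : Continuous χ := by
    apply Complex.continuous_ofReal.comp
    fun_prop
  have hχE : χ (E:ℂ) = 1 := by
    simp only [hχdef, sub_self, norm_zero]
    norm_num
  have hχx : ∀ x : ℝ, E + g ≤ x → χ (x:ℂ) = 0 := by
    intro x hx
    have h1 : ‖(x:ℂ) - (E:ℂ)‖ = x - E := by
      rw [show ((x:ℂ) - (E:ℂ)) = ((x - E : ℝ) : ℂ) by push_cast; ring, Complex.norm_real,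
        Real.norm_eq_abs, abs_of_nonneg (by linarith)]
    simp only [hχdef, h1]
    have h2 : 2 - 3*(x - E)/g ≤ 0 := by
      rw [sub_nonpos, le_div_iff₀ hg]
      nlinarith
    rw [min_eq_right (by linarith), max_eq_left h2]
    norm_num
  have hχ1 : ∀ w : ℂ, ‖w - (E:ℂ)‖ < g/3 → χ w = 1 := by
    intro w hw
    have h2 : (1:ℝ) ≤ 2 - 3*‖w - (E:ℂ)‖/g := by
      have h3 : 3*‖w - (E:ℂ)‖/g ≤ 1 := by
        rw [div_le_one hg]; nlinarith [norm_nonneg (w - (E:ℂ))]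
      linarith
    simp only [hχdef]
    rw [min_eq_left h2, max_eq_right (by norm_num)]
    norm_num
  set P : F →L[ℂ] F := cfc χ H with hPdef
  have hidE : cfc (fun w : ℂ => w - (E:ℂ)) H = H - (E:ℂ) • 1 := by
    rw [cfc_sub (fun w : ℂ => w) (fun _ : ℂ => (E:ℂ)) H (by fun_prop) (by fun_prop),
      cfc_id' ℂ H, cfc_const (E:ℂ) H, Algebra.algebraMap_eq_smul_one]
  have hEP : (H - (E:ℂ) • 1) * P = 0 := by
    rw [← hidE, hPdef, ← cfc_mul (fun w : ℂ => w - (E:ℂ)) χ H (by fun_prop) hχc.continuousOn]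
    rw [cfc_congr (g := fun _ : ℂ => (0:ℂ)) ?_]
    · exact cfc_const_zero ℂ H
    · intro w hw
      rcases hspec w hw with h | ⟨x, rfl, hx⟩
      · simp [h]
      · simp [hχx x hx]
  have hHPψ : H (P ψ) = (E:ℂ) • (P ψ) := by
    have h0 := congrArg (fun T : F →L[ℂ] F => T ψ) hEP
    simp only [ContinuousLinearMap.mul_apply, ContinuousLinearMap.sub_apply,
      ContinuousLinearMap.smul_apply, ContinuousLinearMap.one_apply,
      ContinuousLinearMap.zero_apply] at h0
    exact sub_eq_zero.mp h0
  -- k and P Φ = Φ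
  set k : ℂ → ℂ := fun w => (1 - χ w) * (w - (E:ℂ))⁻¹ with hkdef
  have hkc : Continuous k := by
    rw [continuous_iff_continuousAt]
    intro w
    by_cases hw : w = (E:ℂ)
    · subst hw
      have : ∀ u ∈ Metric.ball (E:ℂ) (g/3), k u = 0 := by
        intro u hu
        rw [Metric.mem_ball, Complex.dist_eq] at hu
        have := hχ1 u (by exact hu)
        simp [hkdef, this]
      have hev : k =ᶠ[nhds (E:ℂ)] fun _ => 0 := by
        filter_upwards [Metric.ball_mem_nhds (E:ℂ) (show (0:ℝ) < g/3 by positivity)] with u hu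
        exact this u hu
      exact (continuousAt_congr hev).2 continuousAt_const
    · exact ((continuous_const.sub hχc).continuousAt).mul
        (ContinuousAt.inv₀ (by fun_prop) (sub_ne_zero.2 hw))
  have h1χ : cfc (fun w : ℂ => 1 - χ w) H = cfc k H * (H - (E:ℂ) • 1) := by
    rw [← hidE, ← cfc_mul k (fun w : ℂ => w - (E:ℂ)) H hkc.continuousOn (by fun_prop)]
    refine cfc_congr fun w hw => ?_
    rcases hspec w hw with h | ⟨x, rfl, hx⟩
    · simp [h, hkdef, hχE]
    · have hxE : x - E ≠ 0 := by intro h; linarith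
      have hxe : ((x:ℂ) - (E:ℂ)) ≠ 0 := by
        rw [show ((x:ℂ) - (E:ℂ)) = ((x - E : ℝ) : ℂ) by push_cast; ring]
        exact Complex.ofReal_ne_zero.2 hxE
      simp only [hkdef]
      field_simp
  have hPΦ : P Φ = Φ := by
    have h2 : (H - (E:ℂ) • 1) Φ = 0 := by
      simp [ContinuousLinearMap.sub_apply, hΦe]
    have h3 := congrArg (fun T : F →L[ℂ] F => T Φ) h1χ
    simp only [ContinuousLinearMap.mul_apply, h2, map_zero] at h3
    rw [cfc_sub (fun _ : ℂ => (1:ℂ)) χ H (by fun_prop) hχc.continuousOn,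
      cfc_const_one ℂ H] at h3
    have h4 : Φ - P Φ = 0 := by
      simpa [ContinuousLinearMap.sub_apply] using h3
    exact (sub_eq_zero.mp h4).symm
  have hPs : star P = P := by
    rw [hPdef, ← cfc_star χ H]
    congr 1
    funext w
    simp [hχdef, Complex.star_def, Complex.conj_ofReal]
  have hPψ : P ψ = 0 := by
    obtain ⟨c0, hc0⟩ := hsimple (P ψ) hHPψ
    have h5 : ⟪Φ, P ψ⟫_ℂ = 0 := by
      rw [← ContinuousLinearMap.adjoint_inner_left, ← ContinuousLinearMap.star_eq_adjoint,
        hPs, hPΦ, hortho]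
    rw [hc0, inner_smul_right, inner_self_eq_norm_sq_to_K, hΦn] at h5
    simp at h5
    rw [hc0, h5, zero_smul]
  -- comparison functions
  set A : ℂ → ℂ := fun w => s w * r w with hAdef
  set B : ℂ → ℂ := fun w => (5/6 : ℂ) * ((r w)^2 + (s w)^2) with hBdef
  set D : ℂ → ℂ := fun w => B w - A w with hDdef
  have hcA : ContinuousOn A (spectrum ℂ H) := hcs.mul hcr
  have hcB : ContinuousOn B (spectrum ℂ H) :=
    continuousOn_const.mul ((hcr.pow 2).add (hcs.pow 2))
  have hcD : ContinuousOn D (spectrum ℂ H) := hcB.sub hcA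
  have hsrc : ∀ w ∈ spectrum ℂ H, s w = (starRingEnd ℂ) (r w) := by
    intro w hw
    simp only [hsdef, hrdef]
    rw [map_inv₀, map_sub, hreal w hw]
  have hDre : ∀ w ∈ spectrum ℂ H,
      D w = ((5/3 * ((r w)^2).re - Complex.normSq (r w) : ℝ) : ℂ) := by
    intro w hw
    have h1 : (r w)^2 + (s w)^2 = ((2 * ((r w)^2).re : ℝ) : ℂ) := by
      rw [hsrc w hw, ← map_pow, Complex.add_conj]
    have h2 : s w * r w = ((Complex.normSq (r w) : ℝ) : ℂ) := by
      rw [hsrc w hw]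
      exact (Complex.normSq_eq_conj_mul_self).symm
    simp only [hDdef, hBdef, hAdef, h1, h2]
    push_cast; ring
  have hDpos : ∀ x : ℝ, E + g ≤ x →
      0 ≤ 5/3 * ((r ((x:ℝ):ℂ))^2).re - Complex.normSq (r ((x:ℝ):ℂ)) := by
    intro x hx
    set v : ℂ := (x:ℂ) - z with hvdef
    have hzre : |z.re - E| ≤ μ := by
      have h1 := Complex.abs_re_le_norm (z - (E:ℂ))
      rw [hz] at h1
      simpa using h1
    have hzim : |z.im| ≤ μ := by
      have h1 := Complex.abs_im_le_norm (z - (E:ℂ))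
      rw [hz] at h1
      simpa using h1
    have ha : g - μ ≤ v.re := by
      have h2 : v.re = x - z.re := by simp [hvdef]
      have h3 : z.re - E ≤ μ := le_of_abs_le hzre
      rw [h2]; linarith
    have hb : |v.im| ≤ μ := by
      have h2 : v.im = -z.im := by simp [hvdef]
      rw [h2, abs_neg]; exact hzim
    have hab : 2 * |v.im| < v.re := by linarith
    have hrv : r ((x:ℝ):ℂ) = v⁻¹ := by simp [hrdef, hvdef]
    have hr2 : ((r ((x:ℝ):ℂ))^2).re = (v.re^2 - v.im^2) / (v.re^2 + v.im^2)^2 := by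
      rw [hrv, inv_pow, Complex.inv_re, map_pow]
      congr 1
      · rw [sq, Complex.mul_re]; ring
      · rw [Complex.normSq_apply]; ring
    have hns : Complex.normSq (r ((x:ℝ):ℂ)) = (v.re^2 + v.im^2)⁻¹ := by
      rw [hrv, map_inv₀, Complex.normSq_apply]; ring_nf
    rw [hr2, hns]
    have h4 := arith_aux14 v.re v.im hab
    linarith
  -- the nonnegative function G
  set c : ℝ := ‖D ((E:ℝ):ℂ)‖ with hcdef
  set G : ℂ → ℂ := fun w => D w + (c:ℂ) * χ w with hGdef
  have hcG : ContinuousOn G (spectrum ℂ H) :=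
    hcD.add (continuousOn_const.mul hχc.continuousOn)
  have hGspec : ∀ w ∈ spectrum ℂ H, (G w).im = 0 ∧ 0 ≤ (G w).re := by
    intro w hw
    have hD := hDre w hw
    rcases hspec w hw with h | ⟨x, rfl, hx⟩
    · subst h
      have hcval : c = |5/3 * ((r ((E:ℝ):ℂ))^2).re - Complex.normSq (r ((E:ℝ):ℂ))| := by
        rw [hcdef, hD, Complex.norm_real, Real.norm_eq_abs]
      simp only [hGdef, hχE, mul_one, hD, hcval]
      constructor
      · simp
      · simp only [Complex.add_re, Complex.ofReal_re]
        have := neg_abs_le (5/3 * ((r ((E:ℝ):ℂ))^2).re - Complex.normSq (r ((E:ℝ):ℂ)))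
        linarith
    · simp only [hGdef, hχx x hx, mul_zero, add_zero, hD]
      exact ⟨by simp, by simpa using hDpos x hx⟩
  set q : ℂ → ℂ := fun w => ((Real.sqrt ((G w).re) : ℝ) : ℂ) with hqdef
  have hcq : ContinuousOn q (spectrum ℂ H) :=
    Complex.continuous_ofReal.comp_continuousOn
      (Real.continuous_sqrt.comp_continuousOn (Complex.continuous_re.comp_continuousOn hcG))
  have hGq : cfc G H = cfc q H * cfc q H := by
    rw [← cfc_mul q q H hcq hcq]
    refine cfc_congr fun w hw => ?_
    obtain ⟨him, hre⟩ := hGspec w hw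
    have h1 : q w * q w = (((G w).re : ℝ) : ℂ) := by
      simp only [hqdef]
      rw [← Complex.ofReal_mul, Real.mul_self_sqrt hre]
    rw [h1]
    exact Complex.ext (by simp) (by simp [him])
  have hqs : star (cfc q H) = cfc q H := by
    rw [← cfc_star q H]
    congr 1
    funext w
    simp [hqdef, Complex.conj_ofReal]
  have hGpos : 0 ≤ (⟪ψ, (cfc G H) ψ⟫_ℂ).re := by
    rw [hGq, ContinuousLinearMap.mul_apply]
    have h6 : ⟪ψ, (cfc q H) ((cfc q H) ψ)⟫_ℂ = ⟪(cfc q H) ψ, (cfc q H) ψ⟫_ℂ := by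
      calc ⟪ψ, (cfc q H) ((cfc q H) ψ)⟫_ℂ
          = ⟪ψ, (ContinuousLinearMap.adjoint (cfc q H)) ((cfc q H) ψ)⟫_ℂ := by
            rw [← ContinuousLinearMap.star_eq_adjoint, hqs]
        _ = ⟪(cfc q H) ψ, (cfc q H) ψ⟫_ℂ :=
            ContinuousLinearMap.adjoint_inner_right _ _ _
    rw [h6, ← RCLike.re_to_complex, inner_self_eq_norm_sq]
    positivity
  have hGeqD : (⟪ψ, (cfc G H) ψ⟫_ℂ).re = (⟪ψ, (cfc D H) ψ⟫_ℂ).re := by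
    have h7 : cfc G H = cfc D H + (c:ℂ) • P := by
      rw [hGdef, cfc_add H D (fun w => (c:ℂ) * χ w) hcD
        (continuousOn_const.mul hχc.continuousOn),
        cfc_const_mul (c:ℂ) χ H hχc.continuousOn, hPdef]
    rw [h7]
    simp [ContinuousLinearMap.add_apply, ContinuousLinearMap.smul_apply, hPψ, inner_add_right]
  have hDBA : cfc D H = cfc B H - cfc A H := by
    rw [hDdef]
    exact cfc_sub B A H hcB hcA
  have hle1 : (⟪ψ, (cfc A H) ψ⟫_ℂ).re ≤ (⟪ψ, (cfc B H) ψ⟫_ℂ).re := by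
    have h8 : (⟪ψ, (cfc D H) ψ⟫_ℂ).re
        = (⟪ψ, (cfc B H) ψ⟫_ℂ).re - (⟪ψ, (cfc A H) ψ⟫_ℂ).re := by
      rw [hDBA]
      simp [ContinuousLinearMap.sub_apply, inner_sub_right]
    have h9 := hGpos
    rw [hGeqD, h8] at h9
    linarith
  have hAop : cfc A H = star (R z) * R z := by
    rw [hAdef, cfc_mul s r H hcs hcr, hrR, ← hstar]
  have hnormA : ‖R z ψ‖^2 = (⟪ψ, (cfc A H) ψ⟫_ℂ).re := by
    rw [hAop, ContinuousLinearMap.mul_apply, ContinuousLinearMap.star_eq_adjoint,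
      ContinuousLinearMap.adjoint_inner_right, ← RCLike.re_to_complex,
      inner_self_eq_norm_sq]
  have hBop : cfc B H = (5/6 : ℂ) • (R z * R z + star (R z * R z)) := by
    rw [hBdef, cfc_const_mul (5/6:ℂ) (fun w => (r w)^2 + (s w)^2) H
      ((hcr.pow 2).add (hcs.pow 2))]
    congr 1
    rw [cfc_add H (fun w => (r w)^2) (fun w => (s w)^2) (hcr.pow 2) (hcs.pow 2),
      cfc_pow r 2 H hcr, cfc_pow s 2 H hcs, hrR, ← hstar, star_mul, sq, sq]
  have hBinner : (⟪ψ, (cfc B H) ψ⟫_ℂ).re = 5/3 * (⟪ψ, R z (R z ψ)⟫_ℂ).re := by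
    rw [hBop, ContinuousLinearMap.smul_apply, inner_smul_right,
      ContinuousLinearMap.add_apply, inner_add_right]
    have h9 : ⟪ψ, (star (R z * R z)) ψ⟫_ℂ = (starRingEnd ℂ) ⟪ψ, (R z * R z) ψ⟫_ℂ := by
      rw [ContinuousLinearMap.star_eq_adjoint, ContinuousLinearMap.adjoint_inner_right]
      exact (inner_conj_symm _ _).symm
    rw [h9, Complex.add_conj, show ((5/6:ℂ)) = ((5/6:ℝ):ℂ) by norm_num,
      ← Complex.ofReal_mul]
    simp only [Complex.ofReal_re, ContinuousLinearMap.mul_apply]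
    ring
  have hfin : ‖R z ψ‖^2 ≤ 5/3 * M := by
    have h10 := hM2 z hz
    have h11 : (⟪ψ, R z (R z ψ)⟫_ℂ).re ≤ M := by
      refine le_trans (Complex.re_le_norm _) ?_
      exact h10
    calc ‖R z ψ‖^2 = (⟪ψ, (cfc A H) ψ⟫_ℂ).re := hnormA
    _ ≤ (⟪ψ, (cfc B H) ψ⟫_ℂ).re := hle1
    _ = 5/3 * (⟪ψ, R z (R z ψ)⟫_ℂ).re := hBinner
    _ ≤ 5/3 * M := by linarith
  exact (Real.le_sqrt (norm_nonneg _) (by positivity)).2 hfin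
end
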